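/- arXiv:1112.2405 — 3 statements merged into one kernel-verified Lean document; each statement's English description precedes it below -/
import Mathlib

section
/- Let G be an invertible symmetric 4×4 real matrix, u ∈ ℝ⁴ with uᵀGu = -1, and let κ, σ ∈ ℝ and ξ ∈ ℝ⁴. Define u♭ = Gu, P = G + u♭u♭ᵀ and Γ = G + 2u♭u♭ᵀ, and let M(ξ) be the symmetric 5×5 real matrix with entries M(ξ)₀₀ = κ²(ξᵀu), M(ξ)₀,(1+β) = M(ξ)_(1+β),0 = σκ·(P G⁻¹ ξ)_β for β = 0,1,2,3, and M(ξ)_(1+α),(1+β) = (ξᵀu)·Γ_{αβ} for α,β = 0,1,2,3. Then det M(ξ) = -κ² · det(G) · (ξᵀu)³ · ((ξᵀu)² - σ² · ξᵀ G⁻¹ P G⁻¹ ξ). -/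
open Matrix

lemma vmv_mulVec {n : Type*} [Fintype n] (w v x : n → ℝ) :
    (vecMulVec w v) *ᵥ x = (v ⬝ᵥ x) • w := by
  ext i
  simp only [Matrix.mulVec, dotProduct, Matrix.vecMulVec_apply, Pi.smul_apply,
    smul_eq_mul, Finset.sum_mul]
  exact Finset.sum_congr rfl fun k _ => by ring

lemma vecMul_vmv {n m : Type*} [Fintype n] (x a : n → ℝ) (b : m → ℝ) :
    x ᵥ* (vecMulVec a b) = (x ⬝ᵥ a) • b := by
  ext j
  simp only [Matrix.vecMul, dotProduct, Matrix.vecMulVec_apply, Pi.smul_apply,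
    smul_eq_mul, Finset.sum_mul]
  exact Finset.sum_congr rfl fun k _ => by ring

lemma mul_vmv {n m : Type*} [Fintype n] (A : Matrix m n ℝ) (a : n → ℝ) (b : m → ℝ) :
    A * vecMulVec a b = vecMulVec (A *ᵥ a) b := by
  ext i j
  simp only [Matrix.mul_apply, Matrix.vecMulVec_apply, Matrix.mulVec, dotProduct,
    Finset.sum_mul]
  exact Finset.sum_congr rfl fun k _ => by ring

lemma vmv_mul {n m : Type*} [Fintype n] (a : m → ℝ) (b : n → ℝ) (A : Matrix n m ℝ) :
    vecMulVec a b * A = vecMulVec a (b ᵥ* A) := by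
  ext i j
  simp only [Matrix.mul_apply, Matrix.vecMulVec_apply, Matrix.vecMul, dotProduct,
    Finset.mul_sum]
  exact Finset.sum_congr rfl fun k _ => by ring

lemma vmv_smul_right {n m : Type*} (a : m → ℝ) (r : ℝ) (b : n → ℝ) :
    vecMulVec a (r • b) = r • vecMulVec a b := by
  ext i j
  simp [Matrix.vecMulVec_apply]
  ring

lemma vmv_smul_left {n m : Type*} (r : ℝ) (a : m → ℝ) (b : n → ℝ) :
    vecMulVec (r • a) b = r • vecMulVec a b := by
  ext i j
  simp [Matrix.vecMulVec_apply]
  ring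

lemma hfr (i : Fin 4) : (finSumFinEquiv (Sum.inr i : Fin 1 ⊕ Fin 4) : Fin 5) = i.succ := by
  ext; simp [finSumFinEquiv, Nat.add_comm]

lemma hf0 : (finSumFinEquiv (Sum.inl 0 : Fin 1 ⊕ Fin 4) : Fin 5) = 0 := rfl

lemma split5 (M : Matrix (Fin 5) (Fin 5) ℝ) :
    M.submatrix (finSumFinEquiv (m := 1) (n := 4)) (finSumFinEquiv (m := 1) (n := 4)) =
      fromBlocks (of fun _ _ => M 0 0) (of fun _ j => M 0 j.succ)
        (of fun i _ => M i.succ 0) (of fun i j => M i.succ j.succ) := by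
  ext i j
  rcases i with i | i <;> rcases j with j | j
  · simp [Subsingleton.elim i 0, Subsingleton.elim j 0, hf0]
  · simp [Subsingleton.elim i 0, hf0, hfr]
  · simp [Subsingleton.elim j 0, hf0, hfr]
  · simp [hfr]

lemma det5 (a t : ℝ) (b c : Fin 4 → ℝ) :
    Matrix.det !![a, c 0, c 1, c 2, c 3;
                  b 0, t, 0, 0, 0;
                  b 1, 0, t, 0, 0;
                  b 2, 0, 0, t, 0;
                  b 3, 0, 0, 0, t] = t ^ 3 * (t * a - c ⬝ᵥ b) := by
  have h2 : (Fin.castSucc 2 : Fin 5) = 2 := rfl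
  have h3 : ((Fin.succ 2 : Fin 4).castSucc : Fin 5) = 3 := rfl
  have h4 : (Fin.succ 2 : Fin 4) = 3 := rfl
  simp [Matrix.det_succ_row_zero, Fin.sum_univ_succ, dotProduct, Fin.succAbove]
  ring

lemma det_block14 (a t : ℝ) (b c : Fin 4 → ℝ) :
    (fromBlocks (of fun _ _ => a) (of fun (_ : Fin 1) j => c j) (of fun i (_ : Fin 1) => b i)
        (t • (1 : Matrix (Fin 4) (Fin 4) ℝ))).det = t ^ 3 * (t * a - c ⬝ᵥ b) := by
  set N5 : Matrix (Fin 5) (Fin 5) ℝ :=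
    !![a, c 0, c 1, c 2, c 3;
       b 0, t, 0, 0, 0;
       b 1, 0, t, 0, 0;
       b 2, 0, 0, t, 0;
       b 3, 0, 0, 0, t] with hN5
  have e1 : (of fun (_ : Fin 1) (j : Fin 4) => c j) = (of fun (_ : Fin 1) j => N5 0 j.succ) := by
    ext i j; fin_cases j <;> rfl
  have e2 : (of fun (i : Fin 4) (_ : Fin 1) => b i) = (of fun i (_ : Fin 1) => N5 i.succ 0) := by
    ext i j; fin_cases i <;> rfl
  have e3 : (t • (1 : Matrix (Fin 4) (Fin 4) ℝ)) = of fun i j => N5 i.succ j.succ := by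
    ext i j
    fin_cases i <;> fin_cases j <;>
      simp [Matrix.one_apply, hN5, Matrix.vecHead, Matrix.vecTail]
  have e4 : (of fun (_ : Fin 1) (_ : Fin 1) => a) = (of fun (_ : Fin 1) (_ : Fin 1) => N5 0 0) := rfl
  rw [e1, e2, e3, e4, ← split5, det_submatrix_equiv_self, det5]

set_option maxRecDepth 40000 in
/-- The determinant of the principal symbol `M(ξ) = ξ_ν A^ν` of the
symmetric-hyperbolic form of the relativistic Euler equations:
`det M(ξ) = -κ² det G (ξᵀu)³ ((ξᵀu)² - σ² ξᵀG⁻¹PG⁻¹ξ)`. -/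
theorem stmt2 (G : Matrix (Fin 4) (Fin 4) ℝ) (hG : G.IsSymm) (hGinv : IsUnit G.det)
    (u : Fin 4 → ℝ) (hu : u ⬝ᵥ G.mulVec u = -1)
    (κ σ : ℝ) (ξ : Fin 4 → ℝ)
    (M : Matrix (Fin 5) (Fin 5) ℝ)
    (hM00 : M 0 0 = κ ^ 2 * (ξ ⬝ᵥ u))
    (hM0r : ∀ β : Fin 4,
      M 0 β.succ =
        σ * κ * ((G + vecMulVec (G.mulVec u) (G.mulVec u)) * G⁻¹).mulVec ξ β)
    (hMc0 : ∀ β : Fin 4,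
      M β.succ 0 =
        σ * κ * ((G + vecMulVec (G.mulVec u) (G.mulVec u)) * G⁻¹).mulVec ξ β)
    (hMrc : ∀ α β : Fin 4,
      M α.succ β.succ =
        (ξ ⬝ᵥ u) * (G + (2 : ℝ) • vecMulVec (G.mulVec u) (G.mulVec u)) α β) :
    M.det = -(κ ^ 2) * G.det * (ξ ⬝ᵥ u) ^ 3 *
      ((ξ ⬝ᵥ u) ^ 2 -
        σ ^ 2 *
          (ξ ⬝ᵥ (G⁻¹ * (G + vecMulVec (G.mulVec u) (G.mulVec u)) * G⁻¹).mulVec ξ)) := by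
  set w : Fin 4 → ℝ := G.mulVec u with hw
  set t : ℝ := ξ ⬝ᵥ u with ht
  set Pm : Matrix (Fin 4) (Fin 4) ℝ := G + vecMulVec w w with hPm
  set Γm : Matrix (Fin 4) (Fin 4) ℝ := G + (2 : ℝ) • vecMulVec w w with hΓm
  set Θ : Matrix (Fin 4) (Fin 4) ℝ := G⁻¹ + (2 : ℝ) • vecMulVec u u with hΘ
  set η : Fin 4 → ℝ := G⁻¹ *ᵥ ξ with hη
  set p : Fin 4 → ℝ := ξ + t • w with hp
  have hGG : G * G⁻¹ = 1 := mul_nonsing_inv G hGinv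
  have hGG' : G⁻¹ * G = 1 := nonsing_inv_mul G hGinv
  have hGisy : (G⁻¹)ᵀ = G⁻¹ := by rw [transpose_nonsing_inv, hG.eq]
  have huw : u ⬝ᵥ w = -1 := hu
  have hwu : w ⬝ᵥ u = -1 := by rw [dotProduct_comm]; exact hu
  have hGiw : G⁻¹ *ᵥ w = u := by
    rw [hw, mulVec_mulVec, hGG', one_mulVec]
  have hvMw : w ᵥ* G⁻¹ = u := by
    rw [← hGisy, vecMul_transpose, hGiw]
  have hwη : w ⬝ᵥ η = t := by
    rw [hη, dotProduct_mulVec, hvMw, dotProduct_comm, ht]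
  have huξ : u ⬝ᵥ ξ = t := by rw [dotProduct_comm, ht]
  -- P G⁻¹ ξ = p
  have hPGξ : (Pm * G⁻¹) *ᵥ ξ = p := by
    rw [← mulVec_mulVec, hPm, add_mulVec, ← hη, vmv_mulVec, hwη]
    have : G *ᵥ η = ξ := by rw [hη, mulVec_mulVec, hGG, one_mulVec]
    rw [this, hp]
  -- Γ Θ = 1
  have hΓΘ : Γm * Θ = 1 := by
    have h1 : G * ((2 : ℝ) • vecMulVec u u) = (2 : ℝ) • vecMulVec w u := by
      rw [mul_smul_comm, mul_vmv, ← hw]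
    have h2 : ((2 : ℝ) • vecMulVec w w) * G⁻¹ = (2 : ℝ) • vecMulVec w u := by
      rw [smul_mul_assoc, vmv_mul, hvMw]
    have h3 : ((2 : ℝ) • vecMulVec w w) * ((2 : ℝ) • vecMulVec u u) =
        -((4 : ℝ) • vecMulVec w u) := by
      rw [smul_mul_assoc, mul_smul_comm, vmv_mul, vecMul_vmv, hwu, vmv_smul_right]
      module
    rw [hΓm, hΘ, add_mul, mul_add, mul_add, hGG, h1, h2, h3]
    module
  have hdetΓΘ : Γm.det * Θ.det = 1 := by rw [← det_mul, hΓΘ, det_one]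
  -- det Γ = - det G
  have hdetΓ : Γm.det = -G.det := by
    have hcol : Γm = G * (1 + replicateCol Unit ((2 : ℝ) • u) * replicateRow Unit w) := by
      rw [mul_add, mul_one, ← Matrix.mul_assoc, ← replicateCol_mulVec, mulVec_smul, ← hw, replicateCol_smul,
        Matrix.smul_mul, ← vecMulVec_eq, hΓm]
    rw [hcol, det_mul, det_one_add_replicateCol_mul_replicateRow, dotProduct_smul, hwu]
    norm_num
  -- blocks of M
  set bb : Fin 4 → ℝ := fun j => σ * κ * ((Pm * G⁻¹) *ᵥ ξ) j with hbbdef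
  have hblocks : M.submatrix (finSumFinEquiv (m := 1) (n := 4)) (finSumFinEquiv (m := 1) (n := 4)) =
      fromBlocks (of fun _ _ => κ ^ 2 * t) (of fun (_ : Fin 1) j => bb j)
        (of fun i (_ : Fin 1) => bb i) (t • Γm) := by
    rw [split5]
    have eA : (of fun (_ : Fin 1) (_ : Fin 1) => M 0 0) =
        (of fun (_ : Fin 1) (_ : Fin 1) => κ ^ 2 * t) := by
      ext i j; exact hM00
    have eB : (of fun (_ : Fin 1) (j : Fin 4) => M 0 j.succ) =
        (of fun (_ : Fin 1) j => bb j) := by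
      ext i j; exact hM0r j
    have eC : (of fun (i : Fin 4) (_ : Fin 1) => M i.succ 0) =
        (of fun i (_ : Fin 1) => bb i) := by
      ext i j; exact hMc0 i
    have eD : (of fun (i : Fin 4) (j : Fin 4) => M i.succ j.succ) = t • Γm := by
      ext i j
      rw [of_apply, hMrc]
      simp [hΓm]
    rw [eA, eB, eC, eD]
  have hdetM : M.det =
      (fromBlocks (of fun _ _ => κ ^ 2 * t) (of fun (_ : Fin 1) j => bb j)
        (of fun i (_ : Fin 1) => bb i) (t • Γm)).det := by
    rw [← det_submatrix_equiv_self (finSumFinEquiv (m := 1) (n := 4)) M, hblocks]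
  -- multiply by fromBlocks 1 0 0 Θ
  have hBΘ : (of fun (_ : Fin 1) j => bb j) * Θ = of fun (_ : Fin 1) j => (bb ᵥ* Θ) j := by
    ext i j
    simp [Matrix.mul_apply, Matrix.vecMul, dotProduct]
  have hDΘ : (t • Γm) * Θ = t • (1 : Matrix (Fin 4) (Fin 4) ℝ) := by
    rw [smul_mul_assoc, hΓΘ]
  have hmul : (fromBlocks (of fun _ _ => κ ^ 2 * t) (of fun (_ : Fin 1) j => bb j)
        (of fun i (_ : Fin 1) => bb i) (t • Γm)) *
        fromBlocks (1 : Matrix (Fin 1) (Fin 1) ℝ) 0 0 Θ =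
      fromBlocks (of fun _ _ => κ ^ 2 * t) (of fun (_ : Fin 1) j => (bb ᵥ* Θ) j)
        (of fun i (_ : Fin 1) => bb i) (t • (1 : Matrix (Fin 4) (Fin 4) ℝ)) := by
    rw [fromBlocks_multiply]
    simp [hBΘ, hDΘ]
  have hkey : M.det * Θ.det = t ^ 3 * (t * (κ ^ 2 * t) - (bb ᵥ* Θ) ⬝ᵥ bb) := by
    have := congrArg Matrix.det hmul
    rw [det_mul, det_fromBlocks_zero₁₂, det_one, one_mul, det_block14] at this
    rw [hdetM, this]
  -- scalar computations
  have hbb : bb = (σ * κ) • p := by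
    funext j
    rw [hbbdef]
    rw [hPGξ]
    rw [Pi.smul_apply, smul_eq_mul]
  have hGip : G⁻¹ *ᵥ p = η + t • u := by
    rw [hp, mulVec_add, mulVec_smul, hGiw, hη]
  have hup : u ⬝ᵥ p = 0 := by
    rw [hp, dotProduct_add, dotProduct_smul, huw, huξ]
    simp
  have hΘp : Θ *ᵥ p = η + t • u := by
    rw [hΘ, add_mulVec, smul_mulVec, vmv_mulVec, hup, hGip]
    simp
  have hpdot : p ⬝ᵥ (η + t • u) = ξ ⬝ᵥ η + t ^ 2 := by
    rw [hp, add_dotProduct, dotProduct_add, dotProduct_add, smul_dotProduct,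
      smul_dotProduct, dotProduct_smul, dotProduct_smul, hwη, hwu]
    rw [show ξ ⬝ᵥ u = t from rfl]
    simp only [smul_eq_mul]
    ring
  have hscal : (bb ᵥ* Θ) ⬝ᵥ bb = σ ^ 2 * κ ^ 2 * (ξ ⬝ᵥ η + t ^ 2) := by
    rw [← dotProduct_mulVec, hbb, mulVec_smul, hΘp, smul_dotProduct, dotProduct_smul, hpdot]
    simp only [smul_eq_mul]
    ring
  have hrhs : ξ ⬝ᵥ (G⁻¹ * Pm * G⁻¹) *ᵥ ξ = ξ ⬝ᵥ η + t ^ 2 := by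
    rw [Matrix.mul_assoc, ← mulVec_mulVec, hPGξ, hGip, dotProduct_add, dotProduct_smul]
    rw [show ξ ⬝ᵥ u = t from rfl]
    simp only [smul_eq_mul]
    ring
  -- assemble
  have hMdet : M.det = (t ^ 3 * (t * (κ ^ 2 * t) - σ ^ 2 * κ ^ 2 * (ξ ⬝ᵥ η + t ^ 2))) * Γm.det := by
    calc M.det = M.det * (Θ.det * Γm.det) := by
          rw [mul_comm Θ.det, hdetΓΘ, mul_one]
      _ = (M.det * Θ.det) * Γm.det := by ring
      _ = _ := by rw [hkey, hscal]
  rw [hMdet, hdetΓ, hrhs]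
  ring
end

section
/- Let G be a symmetric invertible 4×4 real matrix of Lorentzian signature (there exists an invertible S with SᵀGS = diag(-1,1,1,1)) with (G⁻¹)₀₀ < 0, let u ∈ ℝ⁴ satisfy uᵀGu = -1 and u⁰ > 0 (u⁰ the 0-th component of u), and let κ, σ ∈ ℝ with κ ≠ 0 and σ² < 1. Define P = G + (Gu)(Gu)ᵀ, Γ = G + 2(Gu)(Gu)ᵀ, e₀ = (1,0,0,0), and let A⁰ be the symmetric 5×5 real matrix with A⁰₀₀ = κ²·u⁰, A⁰₀,(1+β) = A⁰_(1+β),0 = σκ·(P G⁻¹ e₀)_β for β = 0,1,2,3, and A⁰_(1+α),(1+β) = u⁰·Γ_{αβ}. Then A⁰ is positive definite. -/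
open Matrix

set_option maxHeartbeats 1000000 in
lemma aux_mink (x0 x1 x2 x3 y0 y1 y2 y3 : ℝ)
    (hx : -(x0*x0)+x1*x1+x2*x2+x3*x3 = -1)
    (hy : ¬(y0 = 0 ∧ y1 = 0 ∧ y2 = 0 ∧ y3 = 0)) :
    0 < -(y0*y0)+y1*y1+y2*y2+y3*y3 + 2*(-(x0*y0)+x1*y1+x2*y2+x3*y3)^2 := by
  have hx' : x0^2 = 1 + (x1^2+x2^2+x3^2) := by linear_combination -hx
  have key : (1+2*(x1^2+x2^2+x3^2)) *
      (-(y0*y0)+y1*y1+y2*y2+y3*y3 + 2*(-(x0*y0)+x1*y1+x2*y2+x3*y3)^2)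
      = ((1+2*(x1^2+x2^2+x3^2))*y0 - 2*x0*(x1*y1+x2*y2+x3*y3))^2 + (y1^2+y2^2+y3^2)
        + 2*((x1*y2-x2*y1)^2+(x1*y3-x3*y1)^2+(x2*y3-x3*y2)^2) := by
    linear_combination (2*y0^2*(1+2*(x1^2+x2^2+x3^2)) - 4*(x1*y1+x2*y2+x3*y3)^2) * hx'
  have hpos : 0 < (1+2*(x1^2+x2^2+x3^2)) := by positivity
  by_cases h1 : y1 = 0 ∧ y2 = 0 ∧ y3 = 0
  · obtain ⟨e1, e2, e3⟩ := h1
    have hy0 : y0 ≠ 0 := fun e0 => hy ⟨e0, e1, e2, e3⟩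
    subst e1 e2 e3
    nlinarith [hx', mul_pos (sq_pos_of_ne_zero hy0) hpos]
  · have h2 : 0 < y1^2 + y2^2 + y3^2 := by
      rcases eq_or_ne y1 0 with e1|e1
      · rcases eq_or_ne y2 0 with e2|e2
        · rcases eq_or_ne y3 0 with e3|e3
          · exact absurd ⟨e1, e2, e3⟩ h1
          · linarith [sq_pos_of_ne_zero e3, sq_nonneg y1, sq_nonneg y2]
        · linarith [sq_pos_of_ne_zero e2, sq_nonneg y1, sq_nonneg y3]
      · linarith [sq_pos_of_ne_zero e1, sq_nonneg y2, sq_nonneg y3]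
    have h3 : 0 < (1+2*(x1^2+x2^2+x3^2)) *
        (-(y0*y0)+y1*y1+y2*y2+y3*y3 + 2*(-(x0*y0)+x1*y1+x2*y2+x3*y3)^2) := by
      rw [key]
      have s1 := sq_nonneg ((1+2*(x1^2+x2^2+x3^2))*y0 - 2*x0*(x1*y1+x2*y2+x3*y3))
      have s2 := sq_nonneg (x1*y2-x2*y1)
      have s3 := sq_nonneg (x1*y3-x3*y1)
      have s4 := sq_nonneg (x2*y3-x3*y2)
      linarith
    exact (mul_pos_iff_of_pos_left hpos).mp h3


set_option maxHeartbeats 1600000 in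
/-- The coefficient matrix `A⁰ = t_ν A^ν` (with `t = (1,0,0,0)`) of the
symmetric-hyperbolic form of the relativistic Euler equations is positive
definite, for a Lorentzian metric `G` with `(G⁻¹)₀₀ < 0`, a future-directed
unit timelike vector `u` (`uᵀGu = -1`, `u⁰ > 0`), `κ ≠ 0` and sound speed
`σ` with `σ² < 1`. -/
theorem stmt6 (G : Matrix (Fin 4) (Fin 4) ℝ) (hG : G.IsSymm)
    (hLor : ∃ S : Matrix (Fin 4) (Fin 4) ℝ,
      IsUnit S.det ∧ Sᵀ * G * S = Matrix.diagonal ![(-1 : ℝ), 1, 1, 1])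
    (hGinv : IsUnit G.det) (hG00 : G⁻¹ 0 0 < 0)
    (u : Fin 4 → ℝ) (hu : u ⬝ᵥ G.mulVec u = -1) (hu0 : 0 < u 0)
    (κ σ : ℝ) (hκ : κ ≠ 0) (hσ : σ ^ 2 < 1)
    (A0 : Matrix (Fin 5) (Fin 5) ℝ)
    (hA00 : A0 0 0 = κ ^ 2 * u 0)
    (hA0r : ∀ β : Fin 4,
      A0 0 β.succ =
        σ * κ * ((G + vecMulVec (G.mulVec u) (G.mulVec u)) * G⁻¹).mulVec
          (Pi.single 0 1 : Fin 4 → ℝ) β)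
    (hAc0 : ∀ β : Fin 4,
      A0 β.succ 0 =
        σ * κ * ((G + vecMulVec (G.mulVec u) (G.mulVec u)) * G⁻¹).mulVec
          (Pi.single 0 1 : Fin 4 → ℝ) β)
    (hArc : ∀ α β : Fin 4,
      A0 α.succ β.succ =
        u 0 * (G + (2 : ℝ) • vecMulVec (G.mulVec u) (G.mulVec u)) α β) :
    ∀ V : Fin 5 → ℝ, V ≠ 0 → 0 < V ⬝ᵥ A0.mulVec V := by
  have hGT : Gᵀ = G := hG
  have hGinvT : G⁻¹ᵀ = G⁻¹ := by rw [Matrix.transpose_nonsing_inv, hGT]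
  have hGG : G * G⁻¹ = 1 := Matrix.mul_nonsing_inv G hGinv
  have hGG' : G⁻¹ * G = 1 := Matrix.nonsing_inv_mul G hGinv
  have dotsym : ∀ x y : Fin 4 → ℝ, x ⬝ᵥ G *ᵥ y = y ⬝ᵥ G *ᵥ x := by
    intro x y
    rw [Matrix.dotProduct_mulVec, ← Matrix.mulVec_transpose, hGT, dotProduct_comm]
  have hvmv : ∀ (a b x : Fin 4 → ℝ), (vecMulVec a b) *ᵥ x = (b ⬝ᵥ x) • a := by
    intro a b x
    funext i
    simp only [vecMulVec, mulVec, dotProduct, Matrix.of_apply, Pi.smul_apply, smul_eq_mul,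
      Finset.sum_mul, Finset.mul_sum]
    exact Finset.sum_congr rfl fun j _ => by ring
  -- Γ positive definite (scalar form)
  have hQpos : ∀ w : Fin 4 → ℝ, w ≠ 0 →
      0 < w ⬝ᵥ G *ᵥ w + 2 * (u ⬝ᵥ G *ᵥ w)^2 := by
    intro w hw
    obtain ⟨S, hS, hSG⟩ := hLor
    have key : ∀ x y : Fin 4 → ℝ,
        x ⬝ᵥ (Matrix.diagonal ![(-1:ℝ),1,1,1]) *ᵥ y = (S *ᵥ x) ⬝ᵥ G *ᵥ (S *ᵥ y) := by
      intro x y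
      rw [← hSG, Matrix.mul_assoc, ← Matrix.mulVec_mulVec, Matrix.dotProduct_mulVec,
        Matrix.vecMul_transpose, Matrix.mulVec_mulVec]
    obtain ⟨w', hww⟩ : ∃ w', S *ᵥ w' = w :=
      ⟨S⁻¹ *ᵥ w, by rw [Matrix.mulVec_mulVec, Matrix.mul_nonsing_inv _ hS, Matrix.one_mulVec]⟩
    obtain ⟨u', huu⟩ : ∃ u', S *ᵥ u' = u :=
      ⟨S⁻¹ *ᵥ u, by rw [Matrix.mulVec_mulVec, Matrix.mul_nonsing_inv _ hS, Matrix.one_mulVec]⟩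
    have expand : ∀ x y : Fin 4 → ℝ,
        x ⬝ᵥ (Matrix.diagonal ![(-1:ℝ),1,1,1]) *ᵥ y
          = -(x 0 * y 0) + x 1 * y 1 + x 2 * y 2 + x 3 * y 3 := by
      intro x y
      simp [dotProduct, Fin.sum_univ_four, Matrix.mulVec_diagonal]
    have e : ∀ x y : Fin 4 → ℝ, (S *ᵥ x) ⬝ᵥ G *ᵥ (S *ᵥ y)
        = -(x 0 * y 0) + x 1 * y 1 + x 2 * y 2 + x 3 * y 3 :=
      fun x y => (key x y).symm.trans (expand x y)
    have h1 : w ⬝ᵥ G *ᵥ w = -(w' 0 * w' 0) + w' 1 * w' 1 + w' 2 * w' 2 + w' 3 * w' 3 := by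
      rw [← hww]; exact e w' w'
    have h2 : u ⬝ᵥ G *ᵥ w = -(u' 0 * w' 0) + u' 1 * w' 1 + u' 2 * w' 2 + u' 3 * w' 3 := by
      rw [← hww, ← huu]; exact e u' w'
    have h3 : -(u' 0 * u' 0) + u' 1 * u' 1 + u' 2 * u' 2 + u' 3 * u' 3 = -1 :=
      (e u' u').symm.trans (by rw [huu]; exact hu)
    have hne : ¬(w' 0 = 0 ∧ w' 1 = 0 ∧ w' 2 = 0 ∧ w' 3 = 0) := by
      rintro ⟨e0, e1, e2, e3⟩
      apply hw
      have h0 : w' = 0 := funext fun i => by fin_cases i <;> assumption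
      rw [← hww, h0, Matrix.mulVec_zero]
    rw [h1, h2]
    exact aux_mink (u' 0) (u' 1) (u' 2) (u' 3) (w' 0) (w' 1) (w' 2) (w' 3) h3 hne
  have hQ0 : ∀ w : Fin 4 → ℝ, 0 ≤ w ⬝ᵥ G *ᵥ w + 2 * (u ⬝ᵥ G *ᵥ w)^2 := by
    intro w
    rcases eq_or_ne w 0 with rfl|h
    · simp
    · exact le_of_lt (hQpos w h)
  -- Cauchy-Schwarz for the Γ form
  have CS : ∀ x y : Fin 4 → ℝ,
      (x ⬝ᵥ G *ᵥ y + 2 * (u ⬝ᵥ G *ᵥ x) * (u ⬝ᵥ G *ᵥ y))^2 ≤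
        (x ⬝ᵥ G *ᵥ x + 2 * (u ⬝ᵥ G *ᵥ x)^2) * (y ⬝ᵥ G *ᵥ y + 2 * (u ⬝ᵥ G *ᵥ y)^2) := by
    intro x y
    have hq : ∀ t : ℝ, 0 ≤ (y ⬝ᵥ G *ᵥ y + 2 * (u ⬝ᵥ G *ᵥ y)^2) * (t*t)
        + (2 * (x ⬝ᵥ G *ᵥ y + 2 * (u ⬝ᵥ G *ᵥ x) * (u ⬝ᵥ G *ᵥ y))) * t
        + (x ⬝ᵥ G *ᵥ x + 2 * (u ⬝ᵥ G *ᵥ x)^2) := by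
      intro t
      have h0 := hQ0 (x + t • y)
      have e : (x + t • y) ⬝ᵥ G *ᵥ (x + t • y) + 2 * (u ⬝ᵥ G *ᵥ (x + t • y))^2
          = (y ⬝ᵥ G *ᵥ y + 2 * (u ⬝ᵥ G *ᵥ y)^2) * (t*t)
            + (2 * (x ⬝ᵥ G *ᵥ y + 2 * (u ⬝ᵥ G *ᵥ x) * (u ⬝ᵥ G *ᵥ y))) * t
            + (x ⬝ᵥ G *ᵥ x + 2 * (u ⬝ᵥ G *ᵥ x)^2) := by
        rw [Matrix.mulVec_add, Matrix.mulVec_smul]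
        simp only [dotProduct_add, add_dotProduct, dotProduct_smul, smul_dotProduct,
          smul_eq_mul]
        rw [dotsym y x]
        ring
      rw [e] at h0
      exact h0
    have hd := discrim_le_zero (a := y ⬝ᵥ G *ᵥ y + 2 * (u ⬝ᵥ G *ᵥ y)^2)
      (b := 2 * (x ⬝ᵥ G *ᵥ y + 2 * (u ⬝ᵥ G *ᵥ x) * (u ⬝ᵥ G *ᵥ y)))
      (c := x ⬝ᵥ G *ᵥ x + 2 * (u ⬝ᵥ G *ᵥ x)^2) hq
    rw [discrim] at hd
    nlinarith [hd]
  -- facts about m = G *ᵥ u and ζ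
  have hmu : (G *ᵥ u) ⬝ᵥ u = -1 := by rw [dotProduct_comm]; exact hu
  have hGinvm : G⁻¹ *ᵥ (G *ᵥ u) = u := by
    rw [Matrix.mulVec_mulVec, hGG', Matrix.one_mulVec]
  have hminv : ∀ z : Fin 4 → ℝ, (G *ᵥ u) ⬝ᵥ (G⁻¹ *ᵥ z) = u ⬝ᵥ z := by
    intro z
    rw [Matrix.dotProduct_mulVec, ← Matrix.mulVec_transpose, hGinvT, hGinvm]
  set ζ : Fin 4 → ℝ := Pi.single 0 1 + u 0 • (G *ᵥ u) with hζ
  have hcross : ((G + vecMulVec (G *ᵥ u) (G *ᵥ u)) * G⁻¹) *ᵥ (Pi.single 0 1 : Fin 4 → ℝ)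
      = ζ := by
    rw [← Matrix.mulVec_mulVec, Matrix.add_mulVec, hvmv, Matrix.mulVec_mulVec, hGG,
      Matrix.one_mulVec, hminv, dotProduct_single, mul_one, hζ]
  obtain ⟨x, hx⟩ : ∃ x, x = G⁻¹ *ᵥ ζ := ⟨_, rfl⟩
  have hGx : G *ᵥ x = ζ := by rw [hx, Matrix.mulVec_mulVec, hGG, Matrix.one_mulVec]
  have huζ : u ⬝ᵥ ζ = 0 := by
    rw [hζ, dotProduct_add, dotProduct_smul, dotProduct_single, smul_eq_mul, hu]
    ring
  have hux : u ⬝ᵥ G *ᵥ x = 0 := by rw [hGx]; exact huζ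
  have hxw : ∀ w' : Fin 4 → ℝ, x ⬝ᵥ G *ᵥ w' = ζ ⬝ᵥ w' := by
    intro w'
    rw [dotsym x w', hGx, dotProduct_comm]
  have hxx : x ⬝ᵥ G *ᵥ x = G⁻¹ 0 0 + (u 0)^2 := by
    rw [hxw x, hx, hζ, Matrix.mulVec_add, Matrix.mulVec_smul, hGinvm]
    rw [dotProduct_add, add_dotProduct, add_dotProduct, dotProduct_smul, smul_dotProduct,
      smul_dotProduct, dotProduct_smul, hminv, hmu]
    simp only [smul_eq_mul, single_dotProduct, dotProduct_single, Matrix.mulVec_single,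
      mul_one, one_mul, Pi.smul_apply, MulOpposite.op_one, one_smul, Matrix.col_apply]
    ring
  have hCSζ : ∀ w' : Fin 4 → ℝ,
      (ζ ⬝ᵥ w')^2 ≤ (u 0)^2 * (w' ⬝ᵥ G *ᵥ w' + 2 * (u ⬝ᵥ G *ᵥ w')^2) := by
    intro w'
    have h := CS x w'
    rw [hxw w', hux, hxx] at h
    have hq := hQ0 w'
    nlinarith [h, hq, mul_nonneg (le_of_lt (neg_pos.mpr hG00)) hq]
  -- final assembly
  intro V hV
  have hsplit : V ⬝ᵥ A0 *ᵥ V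
      = κ^2 * u 0 * (V 0)^2 + 2*(σ*κ) * V 0 * (ζ ⬝ᵥ (fun i => V i.succ))
        + u 0 * ((fun i => V i.succ) ⬝ᵥ
            (G + (2:ℝ) • vecMulVec (G *ᵥ u) (G *ᵥ u)) *ᵥ (fun i => V i.succ)) := by
    simp only [dotProduct, mulVec, Fin.sum_univ_succ, Fin.sum_univ_zero]
    simp only [hA00, hA0r, hAc0, hArc, hcross]
    ring
  have hΓ : (fun i => V i.succ) ⬝ᵥ
        (G + (2:ℝ) • vecMulVec (G *ᵥ u) (G *ᵥ u)) *ᵥ (fun i => V i.succ)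
      = (fun i => V i.succ) ⬝ᵥ G *ᵥ (fun i => V i.succ)
        + 2 * (u ⬝ᵥ G *ᵥ (fun i => V i.succ))^2 := by
    rw [Matrix.add_mulVec, dotProduct_add, Matrix.smul_mulVec, hvmv,
      dotProduct_smul, smul_eq_mul, dotProduct_smul, smul_eq_mul]
    rw [show (G *ᵥ u) ⬝ᵥ (fun i => V i.succ) = u ⬝ᵥ G *ᵥ (fun i => V i.succ) from by
      rw [dotProduct_comm]; exact dotsym _ u]
    rw [show (fun i => V i.succ) ⬝ᵥ (G *ᵥ u) = u ⬝ᵥ G *ᵥ (fun i => V i.succ) from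
      dotsym _ u]
    ring
  rw [hsplit, hΓ]
  rcases eq_or_ne (fun i => V i.succ : Fin 4 → ℝ) 0 with hw|hw
  · have ha : V 0 ≠ 0 := by
      intro h0
      apply hV
      funext i
      refine Fin.cases h0 (fun j => ?_) i
      exact congrFun hw j
    rw [hw]
    simp only [dotProduct_zero, Matrix.mulVec_zero]
    have h1 : 0 < κ^2 * u 0 * (V 0)^2 :=
      mul_pos (mul_pos (sq_pos_of_ne_zero hκ) hu0) (sq_pos_of_ne_zero ha)
    nlinarith [h1]
  · have hq := hQpos _ hw
    have hc := hCSζ (fun i => V i.succ)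
    nlinarith [hq, hc, hu0, hσ, hu0,
      sq_nonneg (κ * V 0 * u 0 + σ * (ζ ⬝ᵥ (fun i => V i.succ))),
      mul_nonneg (sq_nonneg σ) (sub_nonneg.mpr hc),
      mul_pos (mul_pos (sub_pos.mpr hσ) (mul_pos hu0 hu0)) hq]
end

section
/- Let N be a positive integer, δ ∈ ℝ, T > 0, c₀ ≥ 1 and a, a', τ, b ≥ 0. Let A⁰, A¹, A², A³ : [0,T] × ℝ³ → Mat_{N×N}(ℝ) be continuously differentiable matrix-valued functions, symmetric at every point, such that for all (t,x): c₀⁻¹|V|² ≤ Vᵀ A⁰(t,x) V ≤ c₀|V|² for all V ∈ ℝ^N, the operator norms satisfy ‖A^a(t,x)‖ ≤ a for a = 1,2,3, Σ_{a=1}^3 ‖∂_{x_a}A^a(t,x)‖ ≤ a', and ‖∂_t A⁰(t,x)‖ ≤ τ. Let B : [0,T] × ℝ³ → Mat_{N×N}(ℝ) be continuous with ‖B(t,x)‖ ≤ b, and let F : [0,T] × ℝ³ → ℝ^N be continuous with ∫(1+|x|)^{2δ}|F(t,x)|²dx < ∞ for each t. Suppose U : [0,T] × ℝ³ → ℝ^N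 is continuously differentiable, has support contained in [0,T] × K for some compact K ⊆ ℝ³, and satisfies A⁰ ∂_t U = Σ_{a=1}^3 A^a ∂_{x_a} U + B U + F on [0,T] × ℝ³. Then there exists a constant C > 0, depending only on δ, c₀, a, a', τ and b, such that the energy E(t) = ∫_{ℝ³}(1+|x|)^{2δ} U(t,x)ᵀ A⁰(t,x) U(t,x) dx satisfies E'(t) ≤ C·(E(t) + ∫_{ℝ³}(1+|x|)^{2δ}|F(t,x)|² dx) for every t ∈ (0,T). -/
open MeasureTheory Matrix

/-- The partial derivative in the `i`-th coordinate direction. -/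
noncomputable def pderiv3 {F : Type*} [NormedAddCommGroup F] [NormedSpace ℝ F]
    (i : Fin 3) (u : EuclideanSpace ℝ (Fin 3) → F) : EuclideanSpace ℝ (Fin 3) → F :=
  fun x => fderiv ℝ u x (EuclideanSpace.single i 1)

local notation "E3" => EuclideanSpace ℝ (Fin 3)

lemma coord_le_norm (v : E3) (i : Fin 3) : |v i| ≤ ‖v‖ := by
  rw [EuclideanSpace.norm_eq]
  rw [← Real.sqrt_sq_eq_abs]
  apply Real.sqrt_le_sqrt
  exact Finset.single_le_sum (f := fun j => ‖v j‖ ^ 2) (fun j _ => by positivity) (Finset.mem_univ i) |>.trans_eq' (by rw [Real.norm_eq_abs, sq_abs])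

lemma ibp_zero (i : Fin 3) (φ : E3 → ℝ)
    (φ' : E3 → (E3 →L[ℝ] ℝ)) {R : ℝ} (hR : 0 ≤ R)
    (hφc : Continuous φ)
    (hd : ∀ x : E3, x ≠ 0 → HasFDerivAt φ (φ' x) x)
    (hφ0 : ∀ x : E3, R < ‖x‖ → φ x = 0)
    (hφ'0 : ∀ x : E3, R < ‖x‖ → φ' x = 0)
    (hmeas : Measurable fun x : E3 => φ' x (EuclideanSpace.single i 1))
    (hbdd : ∃ M, ∀ x : E3, |φ' x (EuclideanSpace.single i 1)| ≤ M) :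
    ∫ x : E3, φ' x (EuclideanSpace.single i 1) = 0 := by
  obtain ⟨M, hM⟩ := hbdd
  set L := PiLp.continuousLinearEquiv 2 ℝ (fun _ : Fin 3 => ℝ) with hL
  have hLsymm : ∀ y : Fin 3 → ℝ, ∀ j, |(L.symm y : E3) j| ≤ ‖(L.symm y : E3)‖ :=
    fun y j => coord_le_norm _ j
  have hLcoord : ∀ y : Fin 3 → ℝ, ∀ j : Fin 3, ((L.symm y : E3) j) = y j := fun _ _ => rfl
  -- transfer integral to the Pi space
  have hmp := (EuclideanSpace.volume_preserving_symm_measurableEquiv_toLp (Fin 3)).symm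
  have htrans : ∫ x : E3, φ' x (EuclideanSpace.single i 1)
      = ∫ y : Fin 3 → ℝ, φ' (L.symm y) (EuclideanSpace.single i 1) := by
    rw [← hmp.integral_comp (MeasurableEquiv.toLp 2 (Fin 3 → ℝ)).measurableEmbedding
      (fun x => φ' x (EuclideanSpace.single i 1))]
    rfl
  rw [htrans]
  set a : Fin 3 → ℝ := fun _ => -(R+1) with ha
  set b : Fin 3 → ℝ := fun _ => (R+1) with hb
  have hab : a ≤ b := fun j => by simp [ha, hb]; linarith
  set g : (Fin 3 → ℝ) → ℝ := fun y => φ' (L.symm y) (EuclideanSpace.single i 1) with hg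
  have hgout : ∀ y, y ∉ Set.Icc a b → g y = 0 := by
    intro y hy
    have : ∃ j, R < |y j| := by
      by_contra h
      push_neg at h
      apply hy
      constructor
      · intro j
        have := (abs_le.1 (h j)).1
        show a j ≤ y j
        simp only [ha]; linarith
      · intro j
        have := (abs_le.1 (h j)).2
        show y j ≤ b j
        simp only [hb]; linarith
    obtain ⟨j, hj⟩ := this
    have : R < ‖(L.symm y : E3)‖ := lt_of_lt_of_le hj (by rw [← hLcoord y j] ; exact coord_le_norm _ j)
    simp [hg, hφ'0 _ this]
  rw [← MeasureTheory.setIntegral_eq_integral_of_forall_compl_eq_zero hgout]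
  -- divergence theorem
  set f : Fin 3 → (Fin 3 → ℝ) → ℝ := fun j y => if j = i then φ (L.symm y) else 0 with hf
  set f' : Fin 3 → (Fin 3 → ℝ) → ((Fin 3 → ℝ) →L[ℝ] ℝ) :=
    fun j y => if j = i then (φ' (L.symm y)).comp (L.symm : (Fin 3 → ℝ) →L[ℝ] E3) else 0 with hf'
  have hsum : ∀ y, (∑ j, f' j y (Pi.single j 1)) = g y := by
    intro y
    rw [Finset.sum_eq_single i]
    · simp [hf', hg]
      congr 1
    · intro j _ hj; simp [hf', hj]
    · simp
  have key := MeasureTheory.integral_divergence_of_hasFDerivAt_off_countable' a b hab f f'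
    {0} (Set.countable_singleton 0)
    (fun j => by
      by_cases h : j = i
      · subst h; simp only [hf, if_pos rfl]
        exact (hφc.comp L.symm.continuous).continuousOn
      · simp only [hf, if_neg h]; exact continuousOn_const)
    (fun y hy j => by
      have hy0 : y ≠ 0 := fun h => hy.2 (by simp [h])
      by_cases h : j = i
      · subst h; simp only [hf, hf', if_pos rfl]
        have h1 : (L.symm y : E3) ≠ 0 := fun h0 => hy0 (by
          have := congrArg L h0; simpa using this)
        exact (hd _ h1).comp y (L.symm.toContinuousLinearMap.hasFDerivAt)
      · simp only [hf, hf', if_neg h]; exact hasFDerivAt_const 0 y)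
    (by
      rw [show (fun y => ∑ j, f' j y (Pi.single j 1)) = g from funext hsum]
      apply MeasureTheory.Measure.integrableOn_of_bounded (M := M)
      · exact (measure_Icc_lt_top).ne
      · exact ((hmeas.comp L.symm.continuous.measurable)).aestronglyMeasurable
      · exact Filter.Eventually.of_forall fun y => by
          simpa [g, Real.norm_eq_abs] using hM (L.symm y))
  rw [show (fun y => ∑ j, f' j y (Pi.single j 1)) = g from funext hsum] at key
  rw [key]
  apply Finset.sum_eq_zero
  intro j _
  have hface : ∀ (c : ℝ), |c| = R + 1 → ∀ z : Fin 2 → ℝ, f j (j.insertNth c z) = 0 := by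
    intro c hc z
    by_cases h : j = i
    · subst h
      simp only [hf, if_pos rfl]
      apply hφ0
      calc R < R + 1 := by linarith
      _ = |((L.symm (j.insertNth c z) : E3)) j| := by rw [hLcoord]; simp [hc.symm, Fin.insertNth_apply_same]
      _ ≤ ‖(L.symm (j.insertNth c z) : E3)‖ := coord_le_norm _ j
    · simp [hf, h]
  rw [MeasureTheory.integral_congr_ae (Filter.Eventually.of_forall
      (fun z => hface (b j) (by simp [hb]; linarith) z)),
    MeasureTheory.integral_congr_ae (Filter.Eventually.of_forall
      (fun z => hface (a j) (by simp [ha]; rw [abs_of_nonpos (by linarith)]; ring) z))]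
  simp

lemma hasFDerivAt_quadform {E : Type*} [NormedAddCommGroup E] [NormedSpace ℝ E] {N : ℕ}
    {x : E} (u : E → Fin N → ℝ) (M : E → Fin N → Fin N → ℝ)
    (u' : Fin N → E →L[ℝ] ℝ) (M' : Fin N → Fin N → E →L[ℝ] ℝ)
    (hu : ∀ j, HasFDerivAt (fun y => u y j) (u' j) x)
    (hM : ∀ j k, HasFDerivAt (fun y => M y j k) (M' j k) x) :
    HasFDerivAt (fun y => ∑ j, ∑ k, u y j * (M y j k * u y k))
      (∑ j, ∑ k, (u x j • (M x j k • u' k + u x k • M' j k) + (M x j k * u x k) • u' j)) x := by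
  apply HasFDerivAt.fun_sum
  intro j _
  apply HasFDerivAt.fun_sum
  intro k _
  exact (hu j).mul ((hM j k).mul (hu k))

lemma quad_algebra {N : ℕ} (u w : Fin N → ℝ) (M D : Fin N → Fin N → ℝ)
    (hM : ∀ j k, M j k = M k j) :
    ∑ j, ∑ k, (u j * (M j k * w k + u k * D j k) + M j k * u k * w j)
      = (∑ j, ∑ k, u j * (D j k * u k)) + 2 * (∑ j, ∑ k, u j * (M j k * w k)) := by
  have swap : ∑ j, ∑ k, M j k * u k * w j = ∑ j, ∑ k, u j * (M j k * w k) := by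
    rw [Finset.sum_comm]
    apply Finset.sum_congr rfl; intro j _
    apply Finset.sum_congr rfl; intro k _
    rw [hM k j]; ring
  have e1 : ∀ j k : Fin N, u j * (M j k * w k + u k * D j k) + M j k * u k * w j
      = (u j * (D j k * u k)) + ((u j * (M j k * w k)) + (M j k * u k * w j)) := by
    intro j k; ring
  simp only [e1, Finset.sum_add_distrib]
  rw [swap]; ring

lemma quad_bound {N : ℕ} (u : Fin N → ℝ) (M : Fin N → Fin N → ℝ) {m : ℝ}
    (hm : ∀ j k, |M j k| ≤ m) (hm0 : 0 ≤ m) :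
    |∑ j, ∑ k, u j * (M j k * u k)| ≤ m * N * ∑ j, u j ^ 2 := by
  calc |∑ j, ∑ k, u j * (M j k * u k)| ≤ ∑ j, |∑ k, u j * (M j k * u k)| :=
        Finset.abs_sum_le_sum_abs _ _
    _ ≤ ∑ j, ∑ k, |u j * (M j k * u k)| :=
        Finset.sum_le_sum fun j _ => Finset.abs_sum_le_sum_abs _ _
    _ ≤ ∑ j, ∑ k, |u j| * (m * |u k|) := by
        apply Finset.sum_le_sum; intro j _; apply Finset.sum_le_sum; intro k _
        rw [abs_mul, abs_mul]
        exact mul_le_mul_of_nonneg_left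
          (mul_le_mul_of_nonneg_right (hm j k) (abs_nonneg _)) (abs_nonneg _)
    _ = m * ((∑ j, |u j|) * (∑ k, |u k|)) := by
        simp only [Finset.mul_sum, Finset.sum_mul]
        apply Finset.sum_congr rfl; intro j _
        apply Finset.sum_congr rfl; intro k _
        ring
    _ ≤ m * (N * ∑ j, u j ^ 2) := by
        apply mul_le_mul_of_nonneg_left _ hm0
        have cs : (∑ j, |u j|) ^ 2 ≤ (N : ℝ) * ∑ j, u j ^ 2 := by
          have h := Finset.sum_mul_sq_le_sq_mul_sq Finset.univ
            (fun _ : Fin N => (1 : ℝ)) (fun j => |u j|)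
          simp only [one_mul, one_pow] at h
          calc (∑ j, |u j|) ^ 2 ≤ (∑ _j : Fin N, (1:ℝ)) * ∑ j, |u j| ^ 2 := h
            _ = (N : ℝ) * ∑ j, u j ^ 2 := by simp [sq_abs]
        calc (∑ j, |u j|) * (∑ k, |u k|) = (∑ j, |u j|) ^ 2 := (sq _).symm
          _ ≤ (N : ℝ) * ∑ j, u j ^ 2 := cs
    _ = m * N * ∑ j, u j ^ 2 := by ring

lemma quad_bound3 {N : ℕ} (u : Fin N → ℝ) (M : Fin 3 → Fin N → Fin N → ℝ) {m : ℝ}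
    (hm : ∀ j k, (∑ i : Fin 3, |M i j k|) ≤ m) (hm0 : 0 ≤ m) :
    |∑ i : Fin 3, ∑ j, ∑ k, u j * (M i j k * u k)| ≤ m * N * ∑ j, u j ^ 2 := by
  have : ∑ i : Fin 3, ∑ j, ∑ k, u j * (M i j k * u k)
      = ∑ j, ∑ k, u j * ((∑ i : Fin 3, M i j k) * u k) := by
    rw [Finset.sum_comm]
    apply Finset.sum_congr rfl; intro j _
    rw [Finset.sum_comm]
    apply Finset.sum_congr rfl; intro k _
    rw [Finset.sum_mul, Finset.mul_sum]
  rw [this]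
  exact quad_bound u _ (fun j k => (Finset.abs_sum_le_sum_abs _ _).trans (hm j k)) hm0

lemma dot_bound {N : ℕ} (u f : Fin N → ℝ) :
    2 * (u ⬝ᵥ f) ≤ (∑ j, u j ^ 2) + N * ‖f‖ ^ 2 := by
  have h1 : ∀ j : Fin N, 2 * (u j * f j) ≤ u j ^ 2 + ‖f‖ ^ 2 := by
    intro j
    have h2 : |f j| ≤ ‖f‖ := by
      simpa using norm_le_pi_norm f j
    nlinarith [sq_nonneg (u j - f j), sq_nonneg (u j + f j), sq_abs (f j), abs_nonneg (f j),
      norm_nonneg f]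
  calc 2 * (u ⬝ᵥ f) = ∑ j, 2 * (u j * f j) := by
        simp [dotProduct, Finset.mul_sum]
    _ ≤ ∑ j : Fin N, (u j ^ 2 + ‖f‖ ^ 2) := Finset.sum_le_sum fun j _ => h1 j
    _ = (∑ j, u j ^ 2) + N * ‖f‖ ^ 2 := by
        rw [Finset.sum_add_distrib, Finset.sum_const]
        simp [nsmul_eq_mul]

noncomputable def wgt (δ : ℝ) : EuclideanSpace ℝ (Fin 3) → ℝ := fun x => (1 + ‖x‖) ^ (2 * δ)

lemma wgt_pos (δ : ℝ) (x : E3) : 0 < wgt δ x :=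
  Real.rpow_pos_of_pos (by positivity) _

lemma wgt_cont (δ : ℝ) : Continuous (wgt δ) := by
  apply Continuous.rpow_const (by continuity)
  intro x; left; positivity

open Classical in
noncomputable def nfd (δ : ℝ) : EuclideanSpace ℝ (Fin 3) → (EuclideanSpace ℝ (Fin 3) →L[ℝ] ℝ) :=
  fun x => if _h : x = (0 : EuclideanSpace ℝ (Fin 3)) then 0
    else (2 * δ * (1 + ‖x‖) ^ (2 * δ - 1)) • fderiv ℝ (fun y : EuclideanSpace ℝ (Fin 3) => ‖y‖) x

lemma nfd_hasFDerivAt (δ : ℝ) {x : E3} (hx : x ≠ 0) :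
    HasFDerivAt (wgt δ) (nfd δ x) x := by
  have hnd : DifferentiableAt ℝ (fun y : E3 => ‖y‖) x :=
    ((contDiffAt_norm ℝ hx).differentiableAt one_ne_zero : DifferentiableAt ℝ (norm) x)
  have h1 : HasFDerivAt (fun y : E3 => 1 + ‖y‖) (fderiv ℝ (fun y : E3 => ‖y‖) x) x := by
    simpa using (hnd.hasFDerivAt.const_add 1)
  have h2 : HasDerivAt (fun r : ℝ => r ^ (2 * δ)) (2 * δ * (1 + ‖x‖) ^ (2 * δ - 1)) (1 + ‖x‖) :=
    Real.hasDerivAt_rpow_const (x := 1 + ‖x‖) (p := 2 * δ) (Or.inl (by positivity))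
  have := h2.comp_hasFDerivAt x h1
  rw [nfd, dif_neg hx]
  exact this

lemma nfd_norm_le (δ : ℝ) (x : E3) : ‖nfd δ x‖ ≤ 2 * |δ| * wgt δ x := by
  have hw := wgt_pos δ x
  rw [nfd]
  split_ifs with h
  · simp; positivity
  · have hns : ‖(2 * δ * (1 + ‖x‖) ^ (2 * δ - 1)) • fderiv ℝ (fun y : E3 => ‖y‖) x‖
        = ‖(2 * δ * (1 + ‖x‖) ^ (2 * δ - 1) : ℝ)‖ * ‖fderiv ℝ (fun y : E3 => ‖y‖) x‖ :=
      norm_smul _ _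
    rw [hns]
    have hfd : ‖fderiv ℝ (fun y : E3 => ‖y‖) x‖ ≤ 1 := by
      by_cases hd : DifferentiableAt ℝ (fun y : E3 => ‖y‖) x
      · rw [norm_fderiv_norm hd]
      · rw [fderiv_zero_of_not_differentiableAt hd]; simp
    calc ‖(2 * δ * (1 + ‖x‖) ^ (2 * δ - 1) : ℝ)‖ * ‖fderiv ℝ (fun y : E3 => ‖y‖) x‖
        ≤ ‖(2 * δ * (1 + ‖x‖) ^ (2 * δ - 1) : ℝ)‖ * 1 :=
          mul_le_mul_of_nonneg_left hfd (norm_nonneg _)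
      _ = 2 * |δ| * (1 + ‖x‖) ^ (2 * δ - 1) := by
          rw [mul_one, Real.norm_eq_abs, abs_mul, abs_mul]
          rw [abs_of_nonneg (le_of_lt (Real.rpow_pos_of_pos (by positivity) _))]
          norm_num
      _ ≤ 2 * |δ| * wgt δ x := by
          apply mul_le_mul_of_nonneg_left _ (by positivity)
          exact Real.rpow_le_rpow_of_exponent_le (by simp [norm_nonneg]) (by linarith)

open Classical in
lemma nfd_measurable (δ : ℝ) (v : E3) : Measurable fun x : E3 => nfd δ x v := by
  have h1 : Measurable fun x : E3 => fderiv ℝ (fun y : E3 => ‖y‖) x v :=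
    measurable_fderiv_apply_const ℝ _ v
  have hc : Continuous fun x : E3 => 2 * δ * (1 + ‖x‖) ^ (2 * δ - 1) := by
    apply Continuous.mul continuous_const
    apply Continuous.rpow_const (by continuity)
    intro x; left; positivity
  have heq : (fun x : E3 => nfd δ x v) = fun x =>
      if x = 0 then (0:ℝ)
      else (2 * δ * (1 + ‖x‖) ^ (2 * δ - 1)) * fderiv ℝ (fun y : E3 => ‖y‖) x v := by
    funext x
    rw [nfd]
    by_cases h : x = 0
    · simp [h]
    · rw [dif_neg h, if_neg h]; simp
  rw [heq]
  exact Measurable.ite (MeasurableSet.singleton 0) measurable_const (hc.measurable.mul h1)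

lemma fderiv_zero_off {K : Set E3} (hK : IsClosed K) {g : E3 → ℝ}
    (h0 : ∀ y ∉ K, g y = 0) {x : E3} (hx : x ∉ K) : fderiv ℝ g x = 0 := by
  have hev : g =ᶠ[nhds x] (fun _ => (0 : ℝ)) :=
    Filter.eventuallyEq_of_mem (hK.isOpen_compl.mem_nhds hx) h0
  rw [hev.fderiv_eq, fderiv_fun_const]
  rfl

lemma integrable_of_supp {f : E3 → ℝ} (hf : Continuous f) {K : Set E3} (hK : IsCompact K)
    (h0 : ∀ x ∉ K, f x = 0) : Integrable f :=
  hf.integrable_of_hasCompactSupport (HasCompactSupport.intro hK h0)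

lemma dotmul {N : ℕ} (u v : Fin N → ℝ) (M : Matrix (Fin N) (Fin N) ℝ) :
    u ⬝ᵥ M.mulVec v = ∑ j, ∑ k, u j * (M j k * v k) := by
  simp [dotProduct, Matrix.mulVec, Finset.mul_sum]

lemma dot_finsum {N : ℕ} (V : Fin N → ℝ) (g : Fin 3 → Fin N → ℝ) :
    V ⬝ᵥ (∑ i, g i) = ∑ i, V ⬝ᵥ g i := by
  simp only [dotProduct, Finset.sum_apply, Finset.mul_sum]
  exact Finset.sum_comm


set_option maxHeartbeats 2000000 in
/-- Weighted `L²` energy estimate for linear first-order symmetric hyperbolic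
systems `A⁰∂ₜU = Σₐ Aᵃ∂ₐU + BU + F` with uniformly positive definite symmetric
`A⁰`: the energy `E(t) = ∫(1+|x|)^{2δ} Uᵀ A⁰ U dx` satisfies
`E'(t) ≤ C (E(t) + ∫(1+|x|)^{2δ}|F|²dx)`, with `C` depending only on
`δ, c₀, a, a', τ, b`. -/
theorem stmt14 (N : ℕ) (hN : 0 < N) (δ T c₀ a a' τ b : ℝ)
    (hT : 0 < T) (hc₀ : 1 ≤ c₀) (ha : 0 ≤ a) (ha' : 0 ≤ a') (hτ : 0 ≤ τ) (hb : 0 ≤ b) :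
    ∃ C : ℝ, 0 < C ∧
      ∀ (A0 : ℝ → EuclideanSpace ℝ (Fin 3) → Matrix (Fin N) (Fin N) ℝ)
        (A : Fin 3 → ℝ → EuclideanSpace ℝ (Fin 3) → Matrix (Fin N) (Fin N) ℝ)
        (B : ℝ → EuclideanSpace ℝ (Fin 3) → Matrix (Fin N) (Fin N) ℝ)
        (F : ℝ → EuclideanSpace ℝ (Fin 3) → Fin N → ℝ)
        (U : ℝ → EuclideanSpace ℝ (Fin 3) → Fin N → ℝ),
        -- `A⁰` and the `Aᵃ` are continuously differentiable
        (∀ j k : Fin N,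
          ContDiff ℝ 1 fun p : ℝ × EuclideanSpace ℝ (Fin 3) => A0 p.1 p.2 j k) →
        (∀ (i : Fin 3) (j k : Fin N),
          ContDiff ℝ 1 fun p : ℝ × EuclideanSpace ℝ (Fin 3) => A i p.1 p.2 j k) →
        -- symmetry
        (∀ t ∈ Set.Icc 0 T, ∀ x, (A0 t x).IsSymm) →
        (∀ i : Fin 3, ∀ t ∈ Set.Icc 0 T, ∀ x, (A i t x).IsSymm) →
        -- uniform positive definiteness of `A⁰`
        (∀ t ∈ Set.Icc 0 T, ∀ x, ∀ V : Fin N → ℝ,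
          c₀⁻¹ * (V ⬝ᵥ V) ≤ V ⬝ᵥ (A0 t x).mulVec V ∧
            V ⬝ᵥ (A0 t x).mulVec V ≤ c₀ * (V ⬝ᵥ V)) →
        -- bounds `‖Aᵃ‖ ≤ a`, `Σₐ‖∂ₐAᵃ‖ ≤ a'`, `‖∂ₜA⁰‖ ≤ τ`
        (∀ i : Fin 3, ∀ t ∈ Set.Icc 0 T, ∀ x, ∀ j k : Fin N, |A i t x j k| ≤ a) →
        (∀ t ∈ Set.Icc 0 T, ∀ x, ∀ j k : Fin N,
          (∑ i : Fin 3, |pderiv3 i (fun y => A i t y j k) x|) ≤ a') →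
        (∀ t ∈ Set.Icc 0 T, ∀ x, ∀ j k : Fin N,
          |deriv (fun s => A0 s x j k) t| ≤ τ) →
        -- `B` continuous and bounded by `b`
        (∀ j k : Fin N,
          Continuous fun p : ℝ × EuclideanSpace ℝ (Fin 3) => B p.1 p.2 j k) →
        (∀ t ∈ Set.Icc 0 T, ∀ x, ∀ j k : Fin N, |B t x j k| ≤ b) →
        -- `F` continuous with finite weighted `L²` norm
        Continuous (fun p : ℝ × EuclideanSpace ℝ (Fin 3) => F p.1 p.2) →
        (∀ t ∈ Set.Icc 0 T,
          Integrable fun x : EuclideanSpace ℝ (Fin 3) =>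
            (1 + ‖x‖) ^ (2 * δ) * ‖F t x‖ ^ 2) →
        -- `U` is `C¹` with support in `[0,T] × K`, `K` compact
        ContDiff ℝ 1 (fun p : ℝ × EuclideanSpace ℝ (Fin 3) => U p.1 p.2) →
        (∃ K : Set (EuclideanSpace ℝ (Fin 3)), IsCompact K ∧
          ∀ t ∈ Set.Icc 0 T, ∀ x, x ∉ K → U t x = 0) →
        -- the symmetric hyperbolic system `A⁰∂ₜU = Σₐ Aᵃ∂ₐU + BU + F`
        (∀ t ∈ Set.Icc 0 T, ∀ x,
          (A0 t x).mulVec (fderiv ℝ (fun s => U s x) t 1) =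
            (∑ i : Fin 3, (A i t x).mulVec (pderiv3 i (U t) x)) +
              (B t x).mulVec (U t x) + F t x) →
        -- conclusion: the energy inequality `E'(t) ≤ C(E(t) + ‖F(t)‖²_{L²_δ})`
        ∀ t ∈ Set.Ioo 0 T, ∃ d : ℝ,
          HasDerivAt (fun s => ∫ x : EuclideanSpace ℝ (Fin 3),
              (1 + ‖x‖) ^ (2 * δ) * (U s x ⬝ᵥ (A0 s x).mulVec (U s x))) d t ∧
          d ≤ C * ((∫ x : EuclideanSpace ℝ (Fin 3),
              (1 + ‖x‖) ^ (2 * δ) * (U t x ⬝ᵥ (A0 t x).mulVec (U t x))) +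
            ∫ x : EuclideanSpace ℝ (Fin 3), (1 + ‖x‖) ^ (2 * δ) * ‖F t x‖ ^ 2) := by
  have hN1' : (1:ℝ) ≤ N := by exact_mod_cast hN
  refine ⟨(N:ℝ) * c₀ * (τ + 6 * |δ| * a + a' + 2 * b + 1) + N + 1, ?_, ?_⟩
  · have h6 : (0:ℝ) ≤ 6 * |δ| * a := mul_nonneg (by positivity) ha
    have h1 : (0:ℝ) ≤ τ + 6 * |δ| * a + a' + 2 * b + 1 := by linarith
    have h2 : (0:ℝ) ≤ (N:ℝ) * c₀ * (τ + 6 * |δ| * a + a' + 2 * b + 1) :=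
      mul_nonneg (mul_nonneg (by positivity) (by linarith)) h1
    linarith
  intro A0 A B F U hA0c hAc hA0s hAs hpos hAa hAa' hA0τ hBc hBb hFc hFi hUc hsupp hPDE t ht
  obtain ⟨K, hK, hKsupp⟩ := hsupp
  obtain ⟨ht0, htT⟩ := ht
  have htIcc : t ∈ Set.Icc (0:ℝ) T := ⟨ht0.le, htT.le⟩
  have hN1 : (1:ℝ) ≤ N := by exact_mod_cast hN
  classical
  -- components C¹
  have hUj : ∀ j : Fin N, ContDiff ℝ 1 fun p : ℝ × EuclideanSpace ℝ (Fin 3) => U p.1 p.2 j :=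
    fun j => (ContinuousLinearMap.proj (R := ℝ) (φ := fun _ : Fin N => ℝ) j).contDiff.comp hUc
  set Q : ℝ → E3 → ℝ := fun s x => ∑ j, ∑ k, U s x j * (A0 s x j k * U s x k) with hQdef
  have hQdot : ∀ (s : ℝ) (x : E3), U s x ⬝ᵥ (A0 s x).mulVec (U s x) = Q s x :=
    fun s x => dotmul _ _ _
  have hQc1 : ContDiff ℝ 1 fun p : ℝ × E3 => Q p.1 p.2 := by
    apply ContDiff.sum; intro j _
    apply ContDiff.sum; intro k _
    exact (hUj j).mul ((hA0c j k).mul (hUj k))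
  set G : ℝ × E3 → ℝ := fun p => fderiv ℝ (fun q : ℝ × E3 => Q q.1 q.2) p (1, 0) with hGdef
  have hGc : Continuous G := (hQc1.continuous_fderiv one_ne_zero).clm_apply continuous_const
  have hGd : ∀ (s : ℝ) (x : E3), HasDerivAt (fun s' => Q s' x) (G (s, x)) s := by
    intro s x
    have hdiff : HasFDerivAt (fun q : ℝ × E3 => Q q.1 q.2)
        (fderiv ℝ (fun q : ℝ × E3 => Q q.1 q.2) (s, x)) (s, x) :=
      ((hQc1.differentiable one_ne_zero) _).hasFDerivAt
    have hline : HasDerivAt (fun s' : ℝ => ((s' : ℝ), x)) (1, (0 : E3)) s :=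
      (hasDerivAt_id s).prodMk (hasDerivAt_const s x)
    exact hdiff.comp_hasDerivAt s hline
  have hQ0 : ∀ s ∈ Set.Icc (0:ℝ) T, ∀ x ∉ K, Q s x = 0 := by
    intro s hs x hx
    have h0 := hKsupp s hs x hx
    simp only [hQdef]
    rw [h0]; simp
  have hG0 : ∀ s ∈ Set.Ioo (0:ℝ) T, ∀ x ∉ K, G (s, x) = 0 := by
    intro s hs x hx
    have hopen : IsOpen ((Set.Ioo (0:ℝ) T) ×ˢ (Kᶜ)) := isOpen_Ioo.prod hK.isClosed.isOpen_compl
    have hmem : (s, x) ∈ (Set.Ioo (0:ℝ) T) ×ˢ (Kᶜ) := ⟨hs, hx⟩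
    have hev : (fun q : ℝ × E3 => Q q.1 q.2) =ᶠ[nhds (s, x)] fun _ => (0:ℝ) :=
      Filter.eventuallyEq_of_mem (hopen.mem_nhds hmem)
        (fun q hq => hQ0 q.1 (Set.Ioo_subset_Icc_self hq.1) q.2 hq.2)
    simp only [hGdef]
    rw [hev.fderiv_eq]
    simp
  -- Step A: differentiate under the integral sign
  set w : E3 → ℝ := wgt δ with hwdef
  set ε : ℝ := min t (T - t) with hεdef
  have hε : 0 < ε := lt_min ht0 (by linarith)
  have hball : Metric.ball t ε ⊆ Set.Ioo 0 T := by
    intro s hs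
    rw [Metric.mem_ball, Real.dist_eq, abs_lt] at hs
    have h1 := min_le_left t (T - t)
    have h2 := min_le_right t (T - t)
    exact ⟨by linarith [hs.1], by linarith [hs.2]⟩
  have hQscont : ∀ s : ℝ, Continuous fun x : E3 => Q s x := fun s =>
    hQc1.continuous.comp (continuous_const.prodMk continuous_id)
  have hGscont : ∀ s : ℝ, Continuous fun x : E3 => G (s, x) := fun s =>
    hGc.comp (continuous_const.prodMk continuous_id)
  obtain ⟨M₀, hM₀⟩ := ((isCompact_Icc (a := t - ε) (b := t + ε)).prod hK).exists_bound_of_continuousOn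
      ((((wgt_cont δ).comp continuous_snd).mul hGc)).continuousOn
  set bound : E3 → ℝ := K.indicator fun _ => max M₀ 0 with hbdef
  have h_bound : ∀ x : E3, ∀ s ∈ Metric.ball t ε, ‖w x * G (s, x)‖ ≤ bound x := by
    intro x s hs
    by_cases hx : x ∈ K
    · have hsI : s ∈ Set.Icc (t - ε) (t + ε) := by
        rw [Metric.mem_ball, Real.dist_eq, abs_lt] at hs
        exact ⟨by linarith [hs.1], by linarith [hs.2]⟩
      have hb := hM₀ (s, x) ⟨hsI, hx⟩
      rw [hbdef, Set.indicator_of_mem hx]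
      exact le_trans hb (le_max_left _ _)
    · rw [hG0 s (hball hs) x hx, mul_zero, norm_zero, hbdef, Set.indicator_of_notMem hx]
  have hbound_int : Integrable bound := by
    rw [hbdef, integrable_indicator_iff hK.measurableSet]
    exact integrableOn_const hK.measure_lt_top.ne
  have hρint : Integrable fun x : E3 => w x * Q t x :=
    integrable_of_supp ((wgt_cont δ).mul (hQscont t)) hK
      (fun x hx => by rw [hQ0 t htIcc x hx, mul_zero])
  have hmain := hasDerivAt_integral_of_dominated_loc_of_deriv_le (μ := volume) (𝕜 := ℝ)
      (F := fun s (x : E3) => w x * Q s x) (F' := fun s (x : E3) => w x * G (s, x)) (x₀ := t)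
      (bound := bound) (s := Metric.ball t ε) (Metric.ball_mem_nhds t hε)
      (Filter.Eventually.of_forall fun s => ((wgt_cont δ).mul (hQscont s)).aestronglyMeasurable)
      hρint
      (((wgt_cont δ).mul (hGscont t)).aestronglyMeasurable)
      (Filter.Eventually.of_forall fun x s hs => h_bound x s hs)
      hbound_int
      (Filter.Eventually.of_forall fun x s _ => (hGd s x).const_mul (w x))
  obtain ⟨hd'int, hEderiv⟩ := hmain
  refine ⟨∫ x : E3, w x * G (t, x), ?_, ?_⟩
  · have hfeq : (fun s => ∫ x : E3, (1 + ‖x‖) ^ (2 * δ) * (U s x ⬝ᵥ (A0 s x).mulVec (U s x)))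
        = fun s => ∫ x : E3, w x * Q s x := by
      funext s
      exact congrArg (integral volume) (funext fun x => by rw [hQdot s x]; rfl)
    rw [hfeq]
    exact hEderiv
  · -- Part 2: the energy estimate
    -- slice regularity in space
    have hUtc1 : ContDiff ℝ 1 (U t) := hUc.comp ((contDiff_const (c := t)).prodMk contDiff_id)
    have hUtj : ∀ j : Fin N, ContDiff ℝ 1 fun y : E3 => U t y j :=
      fun j => (ContinuousLinearMap.proj (R := ℝ) (φ := fun _ : Fin N => ℝ) j).contDiff.comp hUtc1
    have hAtslice : ∀ (i : Fin 3) (j k : Fin N), ContDiff ℝ 1 fun y : E3 => A i t y j k :=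
      fun i j k => (hAc i j k).comp ((contDiff_const (c := t)).prodMk contDiff_id)
    set qf : Fin 3 → E3 → ℝ := fun i y => ∑ j, ∑ k, U t y j * (A i t y j k * U t y k) with hqfdef
    have hqfc1 : ∀ i, ContDiff ℝ 1 (qf i) := by
      intro i; apply ContDiff.sum; intro j _; apply ContDiff.sum; intro k _
      exact (hUtj j).mul ((hAtslice i j k).mul (hUtj k))
    set P : Fin 3 → E3 → ℝ := fun i x => fderiv ℝ (qf i) x (EuclideanSpace.single i 1) with hPdef
    -- slice differentiability in time
    have hUslice : ∀ x : E3, DifferentiableAt ℝ (fun s : ℝ => U s x) t := by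
      intro x
      have h1 : DifferentiableAt ℝ (fun p : ℝ × E3 => U p.1 p.2) (t, x) :=
        (hUc.differentiable one_ne_zero) _
      exact h1.comp t (differentiableAt_fun_id.prodMk (differentiableAt_const x) :
        DifferentiableAt ℝ (fun s : ℝ => (s, x)) t)
    have hA0slice : ∀ (x : E3) (j k : Fin N), DifferentiableAt ℝ (fun s : ℝ => A0 s x j k) t := by
      intro x j k
      have h1 : DifferentiableAt ℝ (fun p : ℝ × E3 => A0 p.1 p.2 j k) (t, x) :=
        ((hA0c j k).differentiable one_ne_zero) _
      exact h1.comp t (differentiableAt_fun_id.prodMk (differentiableAt_const x) :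
        DifferentiableAt ℝ (fun s : ℝ => (s, x)) t)
    -- pointwise identity in time
    have hGpt : ∀ x : E3,
        G (t, x) = (∑ j, ∑ k, U t x j * (deriv (fun s => A0 s x j k) t * U t x k))
          + 2 * (∑ j, ∑ k, U t x j * (A0 t x j k * fderiv ℝ (fun s : ℝ => U s x) t 1 k)) := by
      intro x
      have hu : ∀ j : Fin N, HasFDerivAt (fun s : ℝ => U s x j)
          ((ContinuousLinearMap.proj (R := ℝ) (φ := fun _ : Fin N => ℝ) j).comp
            (fderiv ℝ (fun s : ℝ => U s x) t)) t :=
        fun j => by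
          exact ((ContinuousLinearMap.proj (R := ℝ) (φ := fun _ : Fin N => ℝ)
            j).hasFDerivAt).comp t (hUslice x).hasFDerivAt
      have hMd : ∀ j k : Fin N, HasFDerivAt (fun s : ℝ => A0 s x j k)
          (fderiv ℝ (fun s : ℝ => A0 s x j k) t) t := fun j k => (hA0slice x j k).hasFDerivAt
      have hq := hasFDerivAt_quadform (x := t) (fun s => U s x) (fun s j k => A0 s x j k) _ _ hu hMd
      have h3 := (hGd t x).unique hq.hasDerivAt
      rw [h3]
      simp only [ContinuousLinearMap.sum_apply, ContinuousLinearMap.add_apply,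
        ContinuousLinearMap.smul_apply, ContinuousLinearMap.coe_comp', Function.comp_apply,
        ContinuousLinearMap.proj_apply, smul_eq_mul]
      exact quad_algebra (fun j => U t x j) (fun k => fderiv ℝ (fun s : ℝ => U s x) t 1 k)
        (fun j k => A0 t x j k) (fun j k => deriv (fun s => A0 s x j k) t)
        (fun j k => (hA0s t htIcc x).apply k j)
    -- pointwise identity in space
    have hUtdiff : ∀ x : E3, DifferentiableAt ℝ (U t) x := fun x => (hUtc1.differentiable one_ne_zero) x
    have hPpt : ∀ (i : Fin 3) (x : E3),
        P i x = (∑ j, ∑ k, U t x j * (pderiv3 i (fun y => A i t y j k) x * U t x k))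
          + 2 * (∑ j, ∑ k, U t x j * (A i t x j k * pderiv3 i (U t) x k)) := by
      intro i x
      have hu : ∀ j : Fin N, HasFDerivAt (fun y : E3 => U t y j)
          ((ContinuousLinearMap.proj (R := ℝ) (φ := fun _ : Fin N => ℝ) j).comp
            (fderiv ℝ (U t) x)) x :=
        fun j => by
          exact ((ContinuousLinearMap.proj (R := ℝ) (φ := fun _ : Fin N => ℝ)
            j).hasFDerivAt).comp x (hUtdiff x).hasFDerivAt
      have hMd : ∀ j k : Fin N, HasFDerivAt (fun y : E3 => A i t y j k)
          (fderiv ℝ (fun y : E3 => A i t y j k) x) x :=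
        fun j k => (((hAtslice i j k).differentiable one_ne_zero) x).hasFDerivAt
      have hq := hasFDerivAt_quadform (x := x) (fun y => U t y) (fun y j k => A i t y j k) _ _ hu hMd
      have h3 : fderiv ℝ (qf i) x = ∑ j, ∑ k,
          (U t x j • ((A i t x j k) • ((ContinuousLinearMap.proj (R := ℝ)
                (φ := fun _ : Fin N => ℝ) k).comp (fderiv ℝ (U t) x))
              + (U t x k) • fderiv ℝ (fun y : E3 => A i t y j k) x)
            + ((A i t x j k) * (U t x k)) • ((ContinuousLinearMap.proj (R := ℝ)
                (φ := fun _ : Fin N => ℝ) j).comp (fderiv ℝ (U t) x))) := hq.fderiv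
      simp only [hPdef]
      rw [h3]
      simp only [ContinuousLinearMap.sum_apply, ContinuousLinearMap.add_apply,
        ContinuousLinearMap.smul_apply, ContinuousLinearMap.coe_comp', Function.comp_apply,
        ContinuousLinearMap.proj_apply, smul_eq_mul]
      exact quad_algebra (fun j => U t x j) (fun k => pderiv3 i (U t) x k)
        (fun j k => A i t x j k) (fun j k => pderiv3 i (fun y => A i t y j k) x)
        (fun j k => (hAs i t htIcc x).apply k j)
    -- the PDE in dot form
    have hPDEsum : ∀ x : E3,
        (∑ j, ∑ k, U t x j * (A0 t x j k * fderiv ℝ (fun s : ℝ => U s x) t 1 k))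
        = (∑ i : Fin 3, ∑ j, ∑ k, U t x j * (A i t x j k * pderiv3 i (U t) x k))
          + (U t x ⬝ᵥ (B t x).mulVec (U t x)) + (U t x ⬝ᵥ F t x) := by
      intro x
      have h := congrArg (fun v => U t x ⬝ᵥ v) (hPDE t htIcc x)
      rw [← dotmul (U t x) (fderiv ℝ (fun s : ℝ => U s x) t 1) (A0 t x), h,
        dotProduct_add, dotProduct_add, dot_finsum]
      congr 2
      exact Finset.sum_congr rfl fun i _ => dotmul _ _ _
    -- continuity facts
    have hVcont : ∀ j : Fin N, Continuous fun x : E3 => U t x j := fun j => (hUtj j).continuous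
    have hDtA0cont : ∀ j k : Fin N, Continuous fun x : E3 => deriv (fun s => A0 s x j k) t := by
      intro j k
      have heq : ∀ x : E3, deriv (fun s => A0 s x j k) t
          = fderiv ℝ (fun p : ℝ × E3 => A0 p.1 p.2 j k) (t, x) (1, 0) := by
        intro x
        have hdiff : HasFDerivAt (fun p : ℝ × E3 => A0 p.1 p.2 j k)
            (fderiv ℝ (fun p : ℝ × E3 => A0 p.1 p.2 j k) (t, x)) (t, x) :=
          (((hA0c j k).differentiable one_ne_zero) _).hasFDerivAt
        have hline : HasDerivAt (fun s : ℝ => ((s : ℝ), x)) (1, (0 : E3)) t :=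
          (hasDerivAt_id t).prodMk (hasDerivAt_const t x)
        exact (hdiff.comp_hasDerivAt t hline).deriv
      rw [show (fun x : E3 => deriv (fun s => A0 s x j k) t)
          = fun x : E3 => fderiv ℝ (fun p : ℝ × E3 => A0 p.1 p.2 j k) (t, x) (1, 0) from
        funext heq]
      exact (((hA0c j k).continuous_fderiv one_ne_zero).comp
        (continuous_const.prodMk continuous_id)).clm_apply continuous_const
    have hDAcont : ∀ (i : Fin 3) (j k : Fin N),
        Continuous fun x : E3 => pderiv3 i (fun y => A i t y j k) x := fun i j k =>
      ((hAtslice i j k).continuous_fderiv one_ne_zero).clm_apply continuous_const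
    have hPcont : ∀ i, Continuous (P i) := by
      intro i
      simp only [hPdef]
      exact ((hqfc1 i).continuous_fderiv one_ne_zero).clm_apply continuous_const
    have hBcont : ∀ j k : Fin N, Continuous fun x : E3 => B t x j k :=
      fun j k => (hBc j k).comp (continuous_const.prodMk continuous_id)
    have hFcont : Continuous fun x : E3 => F t x := hFc.comp (continuous_const.prodMk continuous_id)
    have hqfcont : ∀ i, Continuous (qf i) := fun i => (hqfc1 i).continuous
    have hBdotc : Continuous fun x : E3 => U t x ⬝ᵥ (B t x).mulVec (U t x) := by
      rw [show (fun x : E3 => U t x ⬝ᵥ (B t x).mulVec (U t x))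
          = fun x : E3 => ∑ j, ∑ k, U t x j * (B t x j k * U t x k) from
        funext fun x => dotmul _ _ _]
      exact continuous_finset_sum _ fun j _ => continuous_finset_sum _ fun k _ =>
        (hVcont j).mul ((hBcont j k).mul (hVcont k))
    have hFdotc : Continuous fun x : E3 => U t x ⬝ᵥ F t x := by
      rw [show (fun x : E3 => U t x ⬝ᵥ F t x) = fun x : E3 => ∑ j, U t x j * F t x j from rfl]
      exact continuous_finset_sum _ fun j _ => (hVcont j).mul ((continuous_apply j).comp hFcont)
    -- the lower-order part
    set X : E3 → ℝ := fun x =>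
      w x * ((∑ j, ∑ k, U t x j * (deriv (fun s => A0 s x j k) t * U t x k))
        - (∑ i : Fin 3, ∑ j, ∑ k, U t x j * (pderiv3 i (fun y => A i t y j k) x * U t x k))
        + 2 * (U t x ⬝ᵥ (B t x).mulVec (U t x)) + 2 * (U t x ⬝ᵥ F t x)) with hXdef
    have hwG : ∀ x : E3, w x * G (t, x) = X x + ∑ i : Fin 3, w x * P i x := by
      intro x
      rw [hGpt x, hPDEsum x]
      have h2 : ∀ i : Fin 3, (2:ℝ) * (∑ j, ∑ k, U t x j * (A i t x j k * pderiv3 i (U t) x k))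
          = P i x - (∑ j, ∑ k, U t x j * (pderiv3 i (fun y => A i t y j k) x * U t x k)) := by
        intro i; rw [hPpt i x]; ring
      have h3 : (2:ℝ) * (∑ i : Fin 3, ∑ j, ∑ k, U t x j * (A i t x j k * pderiv3 i (U t) x k))
          = (∑ i : Fin 3, P i x)
            - (∑ i : Fin 3, ∑ j, ∑ k, U t x j * (pderiv3 i (fun y => A i t y j k) x * U t x k)) := by
        rw [Finset.mul_sum, ← Finset.sum_sub_distrib]
        exact Finset.sum_congr rfl fun i _ => h2 i
      have h4 : ∑ i : Fin 3, w x * P i x = w x * ∑ i : Fin 3, P i x := by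
        rw [Finset.mul_sum]
      rw [h4, hXdef]
      linear_combination (w x) * h3
    -- support facts
    have hV0 : ∀ x ∉ K, U t x = 0 := fun x hx => hKsupp t htIcc x hx
    have hX0 : ∀ x ∉ K, X x = 0 := by
      intro x hx
      rw [hXdef]
      simp only []
      rw [hV0 x hx]
      simp
    have hqf0 : ∀ i, ∀ x ∉ K, qf i x = 0 := by
      intro i x hx
      simp only [hqfdef]
      rw [hV0 x hx]
      simp
    have hP0 : ∀ i, ∀ x ∉ K, P i x = 0 := by
      intro i x hx
      simp only [hPdef]
      rw [fderiv_zero_off hK.isClosed (hqf0 i) hx]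
      simp
    have hXcont : Continuous X := by
      rw [hXdef]
      apply Continuous.mul (wgt_cont δ)
      apply Continuous.add
      apply Continuous.add
      apply Continuous.sub
      · exact continuous_finset_sum _ fun j _ => continuous_finset_sum _ fun k _ =>
          (hVcont j).mul ((hDtA0cont j k).mul (hVcont k))
      · exact continuous_finset_sum _ fun i _ => continuous_finset_sum _ fun j _ =>
          continuous_finset_sum _ fun k _ => (hVcont j).mul ((hDAcont i j k).mul (hVcont k))
      · exact continuous_const.mul hBdotc
      · exact continuous_const.mul hFdotc
    -- support radius
    obtain ⟨R₀, hR₀⟩ := hK.isBounded.subset_closedBall 0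
    set R : ℝ := max R₀ 0 with hRdef
    have hRnn : (0:ℝ) ≤ R := le_max_right _ _
    have hKR : K ⊆ Metric.closedBall 0 R :=
      hR₀.trans (Metric.closedBall_subset_closedBall (le_max_left _ _))
    have hnotK : ∀ x : E3, R < ‖x‖ → x ∉ K := by
      intro x hx hxK
      have h := hKR hxK
      rw [Metric.mem_closedBall, dist_zero_right] at h
      linarith
    -- integrability
    have hwPint : ∀ i, Integrable fun x : E3 => w x * P i x := fun i =>
      integrable_of_supp ((wgt_cont δ).mul (hPcont i)) hK
        (fun x hx => by rw [hP0 i x hx, mul_zero])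
    have hnb : ∀ (i : Fin 3) (x : E3),
        |nfd δ x (EuclideanSpace.single i 1)| ≤ 2 * |δ| * w x := by
      intro i x
      have h2 := (nfd δ x).le_opNorm (EuclideanSpace.single i (1:ℝ))
      rw [EuclideanSpace.norm_single, norm_one, mul_one] at h2
      calc |nfd δ x (EuclideanSpace.single i 1)|
          = ‖nfd δ x (EuclideanSpace.single i 1)‖ := (Real.norm_eq_abs _).symm
        _ ≤ ‖nfd δ x‖ := h2
        _ ≤ 2 * |δ| * w x := nfd_norm_le δ x
    have hqnfint : ∀ i : Fin 3,
        Integrable fun x : E3 => qf i x * nfd δ x (EuclideanSpace.single i 1) := by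
      intro i
      apply Integrable.mono' (g := fun x : E3 => 2 * |δ| * (w x * |qf i x|))
      · apply Integrable.const_mul
        exact integrable_of_supp ((wgt_cont δ).mul (hqfcont i).abs) hK
          (fun x hx => by rw [hqf0 i x hx]; simp)
      · exact ((hqfcont i).measurable.mul (nfd_measurable δ _)).aestronglyMeasurable
      · apply Filter.Eventually.of_forall
        intro x
        rw [Real.norm_eq_abs, abs_mul]
        calc |qf i x| * |nfd δ x (EuclideanSpace.single i 1)|
            ≤ |qf i x| * (2 * |δ| * w x) := mul_le_mul_of_nonneg_left (hnb i x) (abs_nonneg _)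
          _ = 2 * |δ| * (w x * |qf i x|) := by ring
    -- integration by parts
    have hibp : ∀ i : Fin 3, (∫ x : E3, w x * P i x)
        = - ∫ x : E3, qf i x * nfd δ x (EuclideanSpace.single i 1) := by
      intro i
      have hqdiff : Differentiable ℝ (qf i) := (hqfc1 i).differentiable one_ne_zero
      have hfd0 : ∀ x : E3, R < ‖x‖ → fderiv ℝ (qf i) x = 0 := by
        intro x hx
        apply fderiv_zero_off (Metric.isClosed_closedBall (x := (0:E3)) (ε := R))
          (fun y hy => hqf0 i y (fun hyK => hy (hKR hyK)))
        rw [Metric.mem_closedBall, dist_zero_right]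
        linarith
      set φ' : E3 → E3 →L[ℝ] ℝ := fun y => w y • fderiv ℝ (qf i) y + qf i y • nfd δ y with hφ'def
      have happly : ∀ x : E3, φ' x (EuclideanSpace.single i 1)
          = w x * P i x + qf i x * nfd δ x (EuclideanSpace.single i 1) := by
        intro x
        rw [hφ'def]
        simp only [ContinuousLinearMap.add_apply, ContinuousLinearMap.smul_apply, smul_eq_mul,
          hPdef]
      have hmaj : Continuous fun x : E3 => w x * |P i x| + 2 * |δ| * (w x * |qf i x|) :=
        (((wgt_cont δ).mul (hPcont i).abs)).add
          (continuous_const.mul ((wgt_cont δ).mul (hqfcont i).abs))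
      obtain ⟨C₁, hC₁⟩ := hK.exists_bound_of_continuousOn hmaj.continuousOn
      have hb' : ∀ x : E3, |φ' x (EuclideanSpace.single i 1)| ≤ max C₁ 0 := by
        intro x
        by_cases hx : x ∈ K
        · have h1 : |φ' x (EuclideanSpace.single i 1)|
              ≤ w x * |P i x| + 2 * |δ| * (w x * |qf i x|) := by
            rw [happly x]
            calc |w x * P i x + qf i x * nfd δ x (EuclideanSpace.single i 1)|
                ≤ |w x * P i x| + |qf i x * nfd δ x (EuclideanSpace.single i 1)| := abs_add_le _ _
              _ ≤ w x * |P i x| + 2 * |δ| * (w x * |qf i x|) := by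
                  apply add_le_add
                  · rw [abs_mul, abs_of_nonneg (wgt_pos δ x).le]
                  · rw [abs_mul]
                    calc |qf i x| * |nfd δ x (EuclideanSpace.single i 1)|
                        ≤ |qf i x| * (2 * |δ| * w x) :=
                          mul_le_mul_of_nonneg_left (hnb i x) (abs_nonneg _)
                      _ = 2 * |δ| * (w x * |qf i x|) := by ring
          have h2 := hC₁ x hx
          rw [Real.norm_eq_abs] at h2
          have h3 : w x * |P i x| + 2 * |δ| * (w x * |qf i x|)
              ≤ |w x * |P i x| + 2 * |δ| * (w x * |qf i x|)| := le_abs_self _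
          have h4 := le_max_left C₁ (0:ℝ)
          linarith
        · rw [happly x, hP0 i x hx, hqf0 i x hx]
          simp only [mul_zero, zero_mul, add_zero, abs_zero]
          exact le_max_right _ _
      have h0 := ibp_zero i (fun y => w y * qf i y) φ' hRnn
          ((wgt_cont δ).mul (hqfcont i))
          (fun x hx => (nfd_hasFDerivAt δ hx).mul (hqdiff x).hasFDerivAt)
          (fun x hx => by
            show w x * qf i x = 0
            rw [hqf0 i x (hnotK x hx), mul_zero])
          (fun x hx => by
            rw [hφ'def]
            simp only []
            rw [hfd0 x hx, hqf0 i x (hnotK x hx)]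
            simp)
          (by
            rw [show (fun x : E3 => φ' x (EuclideanSpace.single i 1))
                = fun x => w x * P i x + qf i x * nfd δ x (EuclideanSpace.single i 1) from
              funext happly]
            exact (((wgt_cont δ).mul (hPcont i)).measurable).add
              ((hqfcont i).measurable.mul (nfd_measurable δ _)))
          ⟨max C₁ 0, hb'⟩
      rw [show (fun x : E3 => φ' x (EuclideanSpace.single i 1))
          = fun x => w x * P i x + qf i x * nfd δ x (EuclideanSpace.single i 1) from
        funext happly] at h0
      rw [integral_add (hwPint i) (hqnfint i)] at h0
      linarith
    -- pointwise estimates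
    have hc₀pos : (0:ℝ) < c₀ := lt_of_lt_of_le one_pos hc₀
    have hdotsq : ∀ x : E3, U t x ⬝ᵥ U t x = ∑ j, (U t x j)^2 := by
      intro x; simp [dotProduct, sq]
    have hQnn : ∀ x : E3, 0 ≤ Q t x := by
      intro x
      have h := (hpos t htIcc x (U t x)).1
      rw [hQdot t x, hdotsq x] at h
      have hs : (0:ℝ) ≤ ∑ j, (U t x j)^2 := by positivity
      nlinarith [inv_pos.mpr hc₀pos]
    have hVsq : ∀ x : E3, (∑ j, (U t x j)^2) ≤ c₀ * Q t x := by
      intro x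
      have h := (hpos t htIcc x (U t x)).1
      rw [hQdot t x, hdotsq x] at h
      calc (∑ j, (U t x j)^2) = c₀ * (c₀⁻¹ * ∑ j, (U t x j)^2) := by field_simp
        _ ≤ c₀ * Q t x := mul_le_mul_of_nonneg_left h hc₀pos.le
    set ρ : E3 → ℝ := fun x => w x * Q t x with hρdef
    have hρnn : ∀ x, 0 ≤ ρ x := fun x => mul_nonneg (wgt_pos δ x).le (hQnn x)
    set c1 : ℝ := (τ + a' + 2*b + 1) * N * c₀ with hc1def
    set c2 : ℝ := 2 * |δ| * a * N * c₀ with hc2def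
    have hXle : ∀ x : E3, X x ≤ c1 * ρ x + (N:ℝ) * (w x * ‖F t x‖^2) := by
      intro x
      have hwp := wgt_pos δ x
      have hS := hVsq x
      have hsqnn : (0:ℝ) ≤ ∑ j, (U t x j)^2 := by positivity
      have hT0 : (∑ j, ∑ k, U t x j * (deriv (fun s => A0 s x j k) t * U t x k))
          ≤ τ * N * ∑ j, (U t x j)^2 :=
        le_trans (le_abs_self _) (quad_bound _ _ (hA0τ t htIcc x) hτ)
      have hTa : -(∑ i : Fin 3, ∑ j, ∑ k,
            U t x j * (pderiv3 i (fun y => A i t y j k) x * U t x k))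
          ≤ a' * N * ∑ j, (U t x j)^2 :=
        le_trans (neg_le_abs _) (quad_bound3 _ _ (fun j k => hAa' t htIcc x j k) ha')
      have hTb : (U t x ⬝ᵥ (B t x).mulVec (U t x)) ≤ b * N * ∑ j, (U t x j)^2 := by
        rw [dotmul]
        exact le_trans (le_abs_self _) (quad_bound _ _ (hBb t htIcc x) hb)
      have hTf : 2 * (U t x ⬝ᵥ F t x) ≤ (∑ j, (U t x j)^2) + N * ‖F t x‖^2 := dot_bound _ _
      have hcoeff : (0:ℝ) ≤ (τ + a' + 2*b + 1) * N := by
        apply mul_nonneg (by linarith) (by positivity)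
      have hNle : (∑ j, (U t x j)^2) ≤ (N:ℝ) * ∑ j, (U t x j)^2 :=
        le_mul_of_one_le_left hsqnn hN1
      have hrg : τ * N * (∑ j, (U t x j)^2) + a' * N * (∑ j, (U t x j)^2)
          + 2 * (b * N * (∑ j, (U t x j)^2)) + (N:ℝ) * (∑ j, (U t x j)^2)
          = (τ + a' + 2*b + 1) * N * (∑ j, (U t x j)^2) := by ring
      have hinner : (∑ j, ∑ k, U t x j * (deriv (fun s => A0 s x j k) t * U t x k))
          - (∑ i : Fin 3, ∑ j, ∑ k, U t x j * (pderiv3 i (fun y => A i t y j k) x * U t x k))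
          + 2 * (U t x ⬝ᵥ (B t x).mulVec (U t x)) + 2 * (U t x ⬝ᵥ F t x)
          ≤ (τ + a' + 2*b + 1) * N * (c₀ * Q t x) + N * ‖F t x‖^2 := by
        have h5 := mul_le_mul_of_nonneg_left hS hcoeff
        linarith
      calc X x ≤ w x * ((τ + a' + 2*b + 1) * N * (c₀ * Q t x) + N * ‖F t x‖^2) := by
            rw [hXdef]
            exact mul_le_mul_of_nonneg_left hinner hwp.le
        _ = c1 * ρ x + (N:ℝ) * (w x * ‖F t x‖^2) := by
            rw [hc1def, hρdef]; ring
    have hqnfle : ∀ (i : Fin 3) (x : E3),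
        -(qf i x * nfd δ x (EuclideanSpace.single i 1)) ≤ c2 * ρ x := by
      intro i x
      have hS := hVsq x
      have hsqnn : (0:ℝ) ≤ ∑ j, (U t x j)^2 := by positivity
      have hq : |qf i x| ≤ a * N * ∑ j, (U t x j)^2 :=
        quad_bound _ _ (hAa i t htIcc x) ha
      have hm1 : (0:ℝ) ≤ a * N * ∑ j, (U t x j)^2 := by
        apply mul_nonneg (mul_nonneg ha (by positivity)) hsqnn
      calc -(qf i x * nfd δ x (EuclideanSpace.single i 1))
          ≤ |qf i x * nfd δ x (EuclideanSpace.single i 1)| := neg_le_abs _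
        _ = |qf i x| * |nfd δ x (EuclideanSpace.single i 1)| := abs_mul _ _
        _ ≤ (a * N * ∑ j, (U t x j)^2) * (2 * |δ| * w x) :=
            mul_le_mul hq (hnb i x) (abs_nonneg _) hm1
        _ ≤ (a * N * (c₀ * Q t x)) * (2 * |δ| * w x) := by
            apply mul_le_mul_of_nonneg_right _
              (mul_nonneg (by positivity) (wgt_pos δ x).le)
            exact mul_le_mul_of_nonneg_left hS (mul_nonneg ha (by positivity))
        _ = c2 * ρ x := by rw [hc2def, hρdef]; ring
    -- assemble the integrals
    have hIFint : Integrable fun x : E3 => w x * ‖F t x‖^2 := hFi t htIcc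
    have hXint : Integrable X := integrable_of_supp hXcont hK hX0
    have hd_eq : (∫ x : E3, w x * G (t, x))
        = (∫ x : E3, X x) + ∑ i : Fin 3, ∫ x : E3, w x * P i x := by
      rw [show (fun x : E3 => w x * G (t, x)) = fun x => X x + ∑ i : Fin 3, w x * P i x from
        funext hwG]
      rw [integral_add hXint (integrable_finset_sum _ fun i _ => hwPint i),
        integral_finset_sum _ fun i _ => hwPint i]
    have hEq1 : (∫ x : E3, (1 + ‖x‖) ^ (2*δ) * (U t x ⬝ᵥ (A0 t x).mulVec (U t x)))
        = ∫ x : E3, ρ x :=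
      congrArg (integral volume) (funext fun x => by rw [hQdot t x]; rfl)
    have hEngnn : 0 ≤ ∫ x : E3, ρ x := integral_nonneg hρnn
    have hIFnn : 0 ≤ ∫ x : E3, w x * ‖F t x‖^2 :=
      integral_nonneg fun x => mul_nonneg (wgt_pos δ x).le (sq_nonneg _)
    have hI1 : (∫ x : E3, X x) ≤ c1 * (∫ x : E3, ρ x) + (N:ℝ) * ∫ x : E3, w x * ‖F t x‖^2 := by
      have hrhs : Integrable fun x : E3 => c1 * ρ x + (N:ℝ) * (w x * ‖F t x‖^2) :=
        (hρint.const_mul c1).add (hIFint.const_mul (N:ℝ))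
      calc (∫ x : E3, X x) ≤ ∫ x : E3, (c1 * ρ x + (N:ℝ) * (w x * ‖F t x‖^2)) :=
            integral_mono hXint hrhs hXle
        _ = c1 * (∫ x : E3, ρ x) + (N:ℝ) * ∫ x : E3, w x * ‖F t x‖^2 := by
            rw [integral_add (hρint.const_mul c1) (hIFint.const_mul (N:ℝ)),
              integral_const_mul, integral_const_mul]
    have hI2 : ∀ i : Fin 3, (∫ x : E3, w x * P i x) ≤ c2 * ∫ x : E3, ρ x := by
      intro i
      rw [hibp i, ← integral_neg]
      calc (∫ x : E3, -(qf i x * nfd δ x (EuclideanSpace.single i 1)))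
          ≤ ∫ x : E3, c2 * ρ x :=
            integral_mono (hqnfint i).neg (hρint.const_mul c2) (hqnfle i)
        _ = c2 * ∫ x : E3, ρ x := integral_const_mul _ _
    have hsum : (∑ i : Fin 3, ∫ x : E3, w x * P i x) ≤ 3 * (c2 * ∫ x : E3, ρ x) := by
      calc (∑ i : Fin 3, ∫ x : E3, w x * P i x) ≤ ∑ _i : Fin 3, c2 * ∫ x : E3, ρ x :=
            Finset.sum_le_sum fun i _ => hI2 i
        _ = 3 * (c2 * ∫ x : E3, ρ x) := by
            rw [Finset.sum_const]
            simp
    rw [hEq1, hd_eq]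
    have hC6 : (0:ℝ) ≤ 6 * |δ| * a := mul_nonneg (by positivity) ha
    have hCnn : (0:ℝ) ≤ (N:ℝ) * c₀ * (τ + 6 * |δ| * a + a' + 2 * b + 1) :=
      mul_nonneg (mul_nonneg (by positivity) (by linarith)) (by linarith)
    have hc1c2 : c1 + 3 * c2 ≤ (N:ℝ) * c₀ * (τ + 6 * |δ| * a + a' + 2 * b + 1) + (N:ℝ) + 1 := by
      rw [hc1def, hc2def]
      have : (τ + a' + 2*b + 1) * (N:ℝ) * c₀ + 3 * (2 * |δ| * a * N * c₀)
          = (N:ℝ) * c₀ * (τ + 6 * |δ| * a + a' + 2 * b + 1) := by ring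
      rw [this]
      have : (0:ℝ) < (N:ℝ) + 1 := by positivity
      linarith
    have hNC : (N:ℝ) ≤ (N:ℝ) * c₀ * (τ + 6 * |δ| * a + a' + 2 * b + 1) + (N:ℝ) + 1 := by
      linarith
    calc (∫ x : E3, X x) + ∑ i : Fin 3, ∫ x : E3, w x * P i x
        ≤ (c1 * (∫ x : E3, ρ x) + (N:ℝ) * ∫ x : E3, w x * ‖F t x‖^2)
          + 3 * (c2 * ∫ x : E3, ρ x) := add_le_add hI1 hsum
      _ = (c1 + 3 * c2) * (∫ x : E3, ρ x) + (N:ℝ) * ∫ x : E3, w x * ‖F t x‖^2 := by ring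
      _ ≤ ((N:ℝ) * c₀ * (τ + 6 * |δ| * a + a' + 2 * b + 1) + (N:ℝ) + 1) * (∫ x : E3, ρ x)
          + ((N:ℝ) * c₀ * (τ + 6 * |δ| * a + a' + 2 * b + 1) + (N:ℝ) + 1)
            * ∫ x : E3, w x * ‖F t x‖^2 :=
          add_le_add (mul_le_mul_of_nonneg_right hc1c2 hEngnn)
            (mul_le_mul_of_nonneg_right hNC hIFnn)
      _ = ((N:ℝ) * c₀ * (τ + 6 * |δ| * a + a' + 2 * b + 1) + (N:ℝ) + 1)
          * ((∫ x : E3, ρ x) + ∫ x : E3, w x * ‖F t x‖^2) := by ring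
end
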